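/- arXiv:1612.06988 — 4 statements merged into one kernel-verified Lean document; each statement's English description precedes it below -/
import Mathlib

section
/- Let X = (X_t)_{t∈ℤ} be a 𝒳-valued stochastic process on a probability space (Ω, ℱ, P), let S₀ : Ω → 𝒮 be measurable and independent of the σ-algebra generated by the whole process X, and define S_{k+1} = F(X_k, S_k) for k ≥ 0, where F : 𝒳 × 𝒮 → 𝒮 is measurable. For k ≥ 0 let Z_k : Ω → 𝒳^ℕ be the past at time k, Z_k(ω) = (n ↦ X_{k−n}(ω)). Then the pair sequence (Z_k, S_k) is a Markov process: for every k ≥ 0 and every bounded measurable g : 𝒳^ℕ × 𝒮 → ℝ, the conditional expectation E[g(Z_{k+1}, S_{k+1}) | σ(Z_m, S_m : 0 ≤ m ≤ k)] equals E[g(Z_{k+1}, S_{k+1}) | σ(Z_k, S_k)] P-almost surely. -/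
open MeasureTheory ProbabilityTheory Filter

namespace PairMarkovAux

variable {𝒳 𝒮 : Type*}

/-- The state at time `m ≤ k` as a function of (past at time `k`, initial state). -/
def stateFun (F : 𝒳 × 𝒮 → 𝒮) (k : ℕ) : ℕ → ((ℕ → 𝒳) × 𝒮) → 𝒮
  | 0 => fun q => q.2
  | m + 1 => fun q => F (q.1 (k - m), stateFun F k m q)

lemma measurable_stateFun [MeasurableSpace 𝒳] [MeasurableSpace 𝒮] {F : 𝒳 × 𝒮 → 𝒮}
    (hF : Measurable F) (k : ℕ) : ∀ m, Measurable (stateFun F k m) := by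
  intro m
  induction m with
  | zero => exact measurable_snd
  | succ m ih =>
      exact hF.comp (((measurable_pi_apply _).comp measurable_fst).prodMk ih)

/-- Prepend a symbol to a past sequence. -/
def consFun (x : 𝒳) (z : ℕ → 𝒳) : ℕ → 𝒳 := fun n => Nat.casesOn n x z

lemma measurable_consFun [MeasurableSpace 𝒳] :
    Measurable (fun p : 𝒳 × (ℕ → 𝒳) => consFun p.1 p.2) := by
  apply measurable_pi_lambda
  intro n
  cases n with
  | zero => exact measurable_fst
  | succ m => exact (measurable_pi_apply m).comp measurable_snd

lemma integrable_of_abs_le {δ : Type*} [MeasurableSpace δ] {μ : Measure δ}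
    [IsFiniteMeasure μ] {f : δ → ℝ} {C : ℝ}
    (hf : AEStronglyMeasurable f μ) (hC : ∀ x, |f x| ≤ C) :
    Integrable f μ :=
  ⟨hf, MeasureTheory.HasFiniteIntegral.of_bounded (C := C)
    (ae_of_all _ fun x => by simpa [Real.norm_eq_abs] using hC x)⟩

/-- Tower argument: if a version of `P[f | m₃]` is `m₁`-measurable, then conditioning on any
σ-algebra between `m₁` and `m₃` gives the same result. -/
lemma condexp_tower_of_version {Ω : Type*} {m₁ m₂ m₃ : MeasurableSpace Ω}
    [mΩ : MeasurableSpace Ω] {P : Measure Ω} [IsProbabilityMeasure P]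
    (h12 : m₁ ≤ m₂) (h23 : m₂ ≤ m₃) (h3 : m₃ ≤ mΩ)
    {f h : Ω → ℝ} (hh : Integrable h P)
    (hhm : StronglyMeasurable[m₁] h) (hcond : h =ᵐ[P] P[f | m₃]) :
    P[f | m₂] =ᵐ[P] P[f | m₁] := by
  have key : ∀ (m' : MeasurableSpace Ω), m₁ ≤ m' → m' ≤ m₃ → P[f | m'] =ᵐ[P] h := by
    intro m' h1 hm3
    have hle : m' ≤ mΩ := hm3.trans h3
    calc P[f | m'] =ᵐ[P] P[P[f | m₃] | m'] := (condExp_condExp_of_le hm3 h3).symm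
      _ =ᵐ[P] P[h | m'] := condExp_congr_ae hcond.symm
      _ =ᵐ[P] h := by rw [condExp_of_stronglyMeasurable hle (hhm.mono h1) hh]
  exact (key m₂ h12 h23).trans (key m₁ le_rfl (h12.trans h23)).symm

end PairMarkovAux

open PairMarkovAux

/-- The pair sequence `(Z_k, S_k)` (past of the process together with the
recursively updated state) is a Markov process: conditioning on the whole history
`σ(Z_m, S_m : m ≤ k)` is a.s. the same as conditioning on `σ(Z_k, S_k)`. -/
theorem pair_process_is_markov
    {Ω : Type*} [MeasurableSpace Ω] (P : Measure Ω) [IsProbabilityMeasure P]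
    {𝒳 : Type*} [TopologicalSpace 𝒳] [PolishSpace 𝒳] [MeasurableSpace 𝒳] [BorelSpace 𝒳]
    {𝒮 : Type*} [MeasurableSpace 𝒮] [StandardBorelSpace 𝒮]
    (X : ℤ → Ω → 𝒳) (hX : ∀ t, Measurable (X t))
    (S0 : Ω → 𝒮) (hS0 : Measurable S0)
    (hindep : IndepFun S0 (fun ω (t : ℤ) => X t ω) P)
    (F : 𝒳 × 𝒮 → 𝒮) (hF : Measurable F)
    (S : ℕ → Ω → 𝒮)
    (hS_zero : S 0 = S0)
    (hS_succ : ∀ (k : ℕ) (ω : Ω), S (k + 1) ω = F (X (k : ℤ) ω, S k ω))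
    (Z : ℕ → Ω → ℕ → 𝒳)
    (hZ : ∀ (k : ℕ) (ω : Ω) (n : ℕ), Z k ω n = X ((k : ℤ) - (n : ℤ)) ω)
    (g : (ℕ → 𝒳) × 𝒮 → ℝ) (hg : Measurable g) (hgb : ∃ C, ∀ y, |g y| ≤ C)
    (k : ℕ) :
    P[fun ω => g (Z (k + 1) ω, S (k + 1) ω) |
        ⨆ m : Fin (k + 1), MeasurableSpace.comap (fun ω => (Z (m : ℕ) ω, S (m : ℕ) ω)) inferInstance]
      =ᵐ[P]
    P[fun ω => g (Z (k + 1) ω, S (k + 1) ω) |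
        MeasurableSpace.comap (fun ω => (Z k ω, S k ω)) inferInstance] := by
  classical
  obtain ⟨C₀, hC₀⟩ := hgb
  set C : ℝ := max C₀ 0 with hC_def
  have hC : ∀ y, |g y| ≤ C := fun y => (hC₀ y).trans (le_max_left _ _)
  have hΩne : Nonempty Ω := by
    by_contra hcon
    rw [not_nonempty_iff] at hcon
    have h1 : P Set.univ = 1 := measure_univ
    rw [Set.univ_eq_empty_iff.mpr hcon, measure_empty] at h1
    exact zero_ne_one h1
  haveI : Nonempty 𝒳 := ⟨X 0 hΩne.some⟩
  -- measurability of the basic maps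
  have hZm : ∀ m : ℕ, Measurable (Z m) := by
    intro m
    have hzm : Z m = fun ω (n : ℕ) => X ((m : ℤ) - (n : ℤ)) ω := by
      funext ω n; exact hZ m ω n
    rw [hzm]
    exact measurable_pi_lambda _ fun n => hX _
  have hSm : ∀ m : ℕ, Measurable (S m) := by
    intro m; induction m with
    | zero => rw [hS_zero]; exact hS0
    | succ m ih =>
        have hsm : S (m + 1) = fun ω => F (X (m : ℤ) ω, S m ω) := funext fun ω => hS_succ m ω
        rw [hsm]; exact hF.comp ((hX _).prodMk ih)
  set V : Ω → 𝒳 := X ((k + 1 : ℕ) : ℤ) with hV_def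
  have hVm : Measurable V := hX _
  -- the state as a function of (past at k, initial state)
  set φ := stateFun F k with hφ_def
  have hφm : ∀ m, Measurable (φ m) := measurable_stateFun hF k
  have hSφ : ∀ m, m ≤ k → ∀ ω, S m ω = φ m (Z k ω, S0 ω) := by
    intro m
    induction m with
    | zero =>
        intro _ ω
        rw [hS_zero]; rfl
    | succ m ih =>
        intro hm ω
        have hm' : m ≤ k := by omega
        have h1 : Z k ω (k - m) = X (m : ℤ) ω := by
          rw [hZ]; congr 1 <;> omega
        rw [hS_succ m ω, ih hm' ω]
        show F (X (m : ℤ) ω, φ m (Z k ω, S0 ω)) = F ((Z k ω) (k - m), φ m (Z k ω, S0 ω))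
        rw [h1]
  have hSφk : ∀ ω, S k ω = φ k (Z k ω, S0 ω) := hSφ k le_rfl
  -- the conditional distribution kernel of the next symbol given the past
  haveI : IsProbabilityMeasure (P.map (fun ω => (Z k ω, V ω))) :=
    Measure.isProbabilityMeasure_map ((hZm k).prodMk hVm).aemeasurable
  haveI : IsProbabilityMeasure (P.map (Z k)) := Measure.isProbabilityMeasure_map (hZm k).aemeasurable
  haveI : IsProbabilityMeasure (P.map S0) := Measure.isProbabilityMeasure_map hS0.aemeasurable
  set κ : Kernel (ℕ → 𝒳) 𝒳 := condDistrib V (Z k) P with hκ_def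
  haveI hκMarkov : IsMarkovKernel κ := by rw [hκ_def]; infer_instance
  have hcomp : P.map (fun ω => (Z k ω, V ω)) = (P.map (Z k)) ⊗ₘ κ := by
    rw [hκ_def, condDistrib]
    rw [← Measure.fst_map_prodMk (X := Z k) (Y := V) hVm]
    exact (Measure.disintegrate _ _).symm
  -- independence
  have hindep' : IndepFun (fun ω => (Z k ω, V ω)) S0 P := by
    have hξm : Measurable (fun y : ℤ → 𝒳 => ((fun n : ℕ => y ((k : ℤ) - n)), y ((k + 1 : ℕ) : ℤ))) :=
      (measurable_pi_lambda _ fun n => measurable_pi_apply _).prodMk (measurable_pi_apply _)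
    have h1 := (hindep.symm.comp hξm measurable_id)
    have h2 : ((fun y : ℤ → 𝒳 => ((fun n : ℕ => y ((k : ℤ) - n)), y ((k + 1 : ℕ) : ℤ))) ∘
        (fun ω (t : ℤ) => X t ω)) = fun ω => (Z k ω, V ω) := by
      funext ω
      refine Prod.ext ?_ rfl
      funext n
      exact (hZ k ω n).symm
    rw [h2] at h1
    simpa using h1
  have hmapR : P.map (fun ω => ((Z k ω, V ω), S0 ω)) =
      (P.map (fun ω => (Z k ω, V ω))).prod (P.map S0) :=
    (indepFun_iff_map_prod_eq_prod_map_map ((hZm k).prodMk hVm).aemeasurable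
      hS0.aemeasurable).mp hindep'
  -- the one-step function
  set α0 : 𝒳 × ((ℕ → 𝒳) × 𝒮) → ℝ := fun p => g (consFun p.1 p.2.1, F (p.2.1 0, p.2.2)) with hα_def
  have hα0m : Measurable α0 := by
    apply hg.comp
    refine Measurable.prodMk ?_ ?_
    · exact measurable_consFun.comp (measurable_fst.prodMk (measurable_fst.comp measurable_snd))
    · exact hF.comp (((measurable_pi_apply 0).comp (measurable_fst.comp measurable_snd)).prodMk
        (measurable_snd.comp measurable_snd))
  have hα0b : ∀ p, |α0 p| ≤ C := fun p => hC _
  set Ψ : (ℕ → 𝒳) × 𝒮 → ℝ := fun q => ∫ x, α0 (x, q) ∂(κ q.1) with hΨ_def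
  have hΨsm : StronglyMeasurable Ψ := by
    have hrw : Ψ = fun q => ∫ x,
        (fun p : ((ℕ → 𝒳) × 𝒮) × 𝒳 => α0 (p.2, p.1)) (q, x) ∂((Kernel.comap (mγ := inferInstance) κ Prod.fst measurable_fst) q) := by
      funext q; rw [Kernel.comap_apply]
    rw [hrw]
    exact ((hα0m.comp (measurable_snd.prodMk measurable_fst)).stronglyMeasurable).integral_kernel_prod_right'
  have hΨb : ∀ q, |Ψ q| ≤ C := by
    intro q
    have hb := norm_integral_le_of_norm_le_const (μ := κ q.1)
      (f := fun x => α0 (x, q)) (C := C) (ae_of_all _ fun x => by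
        simpa [Real.norm_eq_abs] using hα0b (x, q))
    simpa [Real.norm_eq_abs, measure_univ] using hb
  -- the target function and its conditional-expectation candidate
  set f : Ω → ℝ := fun ω => g (Z (k + 1) ω, S (k + 1) ω) with hf_def
  have hZ0 : ∀ ω, Z k ω 0 = X (k : ℤ) ω := by
    intro ω; rw [hZ]; congr 1 <;> omega
  have hcons : ∀ ω, Z (k + 1) ω = consFun (V ω) (Z k ω) := by
    intro ω; funext n
    cases n with
    | zero =>
        show Z (k + 1) ω 0 = V ω
        rw [hZ, hV_def]; congr 1 <;> omega
    | succ n =>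
        show Z (k + 1) ω (n + 1) = Z k ω n
        rw [hZ, hZ]; congr 1 <;> omega
  have hfα : ∀ ω, f ω = α0 (V ω, (Z k ω, S k ω)) := by
    intro ω
    show g (Z (k + 1) ω, S (k + 1) ω) = g (consFun (V ω) (Z k ω), F ((Z k ω) 0, S k ω))
    rw [hcons ω, hS_succ k ω, hZ0 ω]
  have hfm : Measurable f := hg.comp ((hZm _).prodMk (hSm _))
  have hfb : ∀ ω, |f ω| ≤ C := fun ω => hC _
  have hfint : Integrable f P := integrable_of_abs_le hfm.aestronglyMeasurable hfb
  set h : Ω → ℝ := fun ω => Ψ (Z k ω, S k ω) with hh_def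
  have hhsm : StronglyMeasurable h := hΨsm.comp_measurable ((hZm k).prodMk (hSm k))
  have hhint : Integrable h P := integrable_of_abs_le hhsm.aestronglyMeasurable fun ω => hΨb _
  -- the σ-algebras
  have hWm : Measurable (fun ω => (Z k ω, S0 ω)) := (hZm k).prodMk hS0
  have hm₃le : MeasurableSpace.comap (fun ω => (Z k ω, S0 ω)) inferInstance ≤
      (inferInstance : MeasurableSpace Ω) := hWm.comap_le
  have hhm1 : StronglyMeasurable[MeasurableSpace.comap (fun ω => (Z k ω, S k ω)) inferInstance] h :=
    hΨsm.comp_measurable (Measurable.of_comap_le le_rfl)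
  have hm₂₃ : (⨆ m : Fin (k + 1),
        MeasurableSpace.comap (fun ω => (Z (m : ℕ) ω, S (m : ℕ) ω)) inferInstance) ≤
      MeasurableSpace.comap (fun ω => (Z k ω, S0 ω)) inferInstance := by
    refine iSup_le fun m => ?_
    have hmk : (m : ℕ) ≤ k := Nat.lt_succ_iff.mp m.isLt
    have hθm : Measurable (fun q : (ℕ → 𝒳) × 𝒮 =>
        ((fun n => q.1 (n + (k - (m : ℕ)))), φ (m : ℕ) q)) :=
      (measurable_pi_lambda _ fun n => (measurable_pi_apply _).comp measurable_fst).prodMk (hφm _)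
    have hcompose : (fun ω => (Z (m : ℕ) ω, S (m : ℕ) ω)) =
        (fun q : (ℕ → 𝒳) × 𝒮 => ((fun n => q.1 (n + (k - (m : ℕ)))), φ (m : ℕ) q)) ∘
          (fun ω => (Z k ω, S0 ω)) := by
      funext ω
      refine Prod.ext ?_ (hSφ _ hmk ω)
      funext n
      show Z (m : ℕ) ω n = Z k ω (n + (k - (m : ℕ)))
      rw [hZ, hZ]; congr 1 <;> omega
    rw [hcompose, ← MeasurableSpace.comap_comp]
    exact MeasurableSpace.comap_mono hθm.comap_le
  have hm₁₂ : MeasurableSpace.comap (fun ω => (Z k ω, S k ω)) inferInstance ≤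
      ⨆ m : Fin (k + 1),
        MeasurableSpace.comap (fun ω => (Z (m : ℕ) ω, S (m : ℕ) ω)) inferInstance :=
    le_iSup (fun m : Fin (k + 1) =>
      MeasurableSpace.comap (fun ω => (Z (m : ℕ) ω, S (m : ℕ) ω)) inferInstance)
      ⟨k, Nat.lt_succ_self k⟩
  -- h is a version of the conditional expectation of f given σ(Z_k, S_0)
  have hcond : h =ᵐ[P] P[f | MeasurableSpace.comap (fun ω => (Z k ω, S0 ω)) inferInstance] := by
    refine ae_eq_condExp_of_forall_setIntegral_eq hm₃le hfint
      (fun s _ _ => hhint.integrableOn) ?_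
      ((hhm1.mono (hm₁₂.trans hm₂₃)).aestronglyMeasurable)
    intro s hs _
    obtain ⟨B, hB, rfl⟩ := hs
    have hWB : MeasurableSet ((fun ω => (Z k ω, S0 ω)) ⁻¹' B) := hWm hB
    set G : ((ℕ → 𝒳) × 𝒳) × 𝒮 → ℝ := fun p =>
      if (p.1.1, p.2) ∈ B then α0 (p.1.2, (p.1.1, φ k (p.1.1, p.2))) else 0 with hG_def
    set H : ((ℕ → 𝒳) × 𝒳) × 𝒮 → ℝ := fun p =>
      if (p.1.1, p.2) ∈ B then Ψ (p.1.1, φ k (p.1.1, p.2)) else 0 with hH_def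
    have hmem : Measurable (fun p : ((ℕ → 𝒳) × 𝒳) × 𝒮 => (p.1.1, p.2)) :=
      (measurable_fst.comp measurable_fst).prodMk measurable_snd
    have hGm : Measurable G := by
      refine Measurable.ite (hB.preimage hmem) ?_ measurable_const
      exact hα0m.comp ((measurable_snd.comp measurable_fst).prodMk
        ((measurable_fst.comp measurable_fst).prodMk
          ((hφm k).comp ((measurable_fst.comp measurable_fst).prodMk measurable_snd))))
    have hHm : Measurable H := by
      refine Measurable.ite (hB.preimage hmem) ?_ measurable_const
      exact hΨsm.measurable.comp ((measurable_fst.comp measurable_fst).prodMk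
        ((hφm k).comp ((measurable_fst.comp measurable_fst).prodMk measurable_snd)))
    have hGb : ∀ p, |G p| ≤ C := by
      intro p
      rw [hG_def]
      by_cases hp : (p.1.1, p.2) ∈ B
      · simpa [hp] using hα0b _
      · simp [hp, hC_def, le_max_right]
    have hHb : ∀ p, |H p| ≤ C := by
      intro p
      rw [hH_def]
      by_cases hp : (p.1.1, p.2) ∈ B
      · simpa [hp] using hΨb _
      · simp [hp, hC_def, le_max_right]
    have hRm : Measurable (fun ω => ((Z k ω, V ω), S0 ω)) :=
      ((hZm k).prodMk hVm).prodMk hS0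
    have hfeq : ∀ ω, ((fun ω => (Z k ω, S0 ω)) ⁻¹' B).indicator f ω =
        G ((Z k ω, V ω), S0 ω) := by
      intro ω
      rw [Set.indicator_apply]
      by_cases hωB : (Z k ω, S0 ω) ∈ B
      · have hω' : ω ∈ (fun ω => (Z k ω, S0 ω)) ⁻¹' B := hωB
        rw [if_pos hω']
        show f ω = if (Z k ω, S0 ω) ∈ B then α0 (V ω, (Z k ω, φ k (Z k ω, S0 ω))) else 0
        rw [if_pos hωB, hfα ω, hSφk ω]
      · have hω' : ω ∉ (fun ω => (Z k ω, S0 ω)) ⁻¹' B := hωB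
        rw [if_neg hω']
        show (0 : ℝ) = if (Z k ω, S0 ω) ∈ B then α0 (V ω, (Z k ω, φ k (Z k ω, S0 ω))) else 0
        rw [if_neg hωB]
    have hheq : ∀ ω, ((fun ω => (Z k ω, S0 ω)) ⁻¹' B).indicator h ω =
        H ((Z k ω, V ω), S0 ω) := by
      intro ω
      rw [Set.indicator_apply]
      by_cases hωB : (Z k ω, S0 ω) ∈ B
      · have hω' : ω ∈ (fun ω => (Z k ω, S0 ω)) ⁻¹' B := hωB
        rw [if_pos hω']
        show h ω = if (Z k ω, S0 ω) ∈ B then Ψ (Z k ω, φ k (Z k ω, S0 ω)) else 0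
        rw [if_pos hωB]
        show Ψ (Z k ω, S k ω) = Ψ (Z k ω, φ k (Z k ω, S0 ω))
        rw [hSφk ω]
      · have hω' : ω ∉ (fun ω => (Z k ω, S0 ω)) ⁻¹' B := hωB
        rw [if_neg hω']
        show (0 : ℝ) = if (Z k ω, S0 ω) ∈ B then Ψ (Z k ω, φ k (Z k ω, S0 ω)) else 0
        rw [if_neg hωB]
    have hGint : Integrable G (((P.map (Z k)) ⊗ₘ κ).prod (P.map S0)) :=
      integrable_of_abs_le hGm.aestronglyMeasurable hGb
    have hHint : Integrable H (((P.map (Z k)) ⊗ₘ κ).prod (P.map S0)) :=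
      integrable_of_abs_le hHm.aestronglyMeasurable hHb
    calc ∫ ω in (fun ω => (Z k ω, S0 ω)) ⁻¹' B, h ω ∂P
        = ∫ ω, H ((Z k ω, V ω), S0 ω) ∂P := by
          rw [← integral_indicator hWB]
          exact integral_congr_ae (ae_of_all _ hheq)
      _ = ∫ p, H p ∂(P.map (fun ω => ((Z k ω, V ω), S0 ω))) :=
          (integral_map hRm.aemeasurable hHm.aestronglyMeasurable).symm
      _ = ∫ p, H p ∂(((P.map (Z k)) ⊗ₘ κ).prod (P.map S0)) := by
          rw [hmapR, hcomp]
      _ = ∫ p, G p ∂(((P.map (Z k)) ⊗ₘ κ).prod (P.map S0)) := by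
          rw [integral_prod_symm _ hHint, integral_prod_symm _ hGint]
          refine integral_congr_ae (ae_of_all _ fun s => ?_)
          show (∫ zx, H (zx, s) ∂((P.map (Z k)) ⊗ₘ κ))
              = ∫ zx, G (zx, s) ∂((P.map (Z k)) ⊗ₘ κ)
          have hGint2 : Integrable (fun zx => G (zx, s)) ((P.map (Z k)) ⊗ₘ κ) :=
            integrable_of_abs_le
              (hGm.comp (measurable_id.prodMk measurable_const)).aestronglyMeasurable
              (fun zx => hGb (zx, s))
          have hHint2 : Integrable (fun zx => H (zx, s)) ((P.map (Z k)) ⊗ₘ κ) :=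
            integrable_of_abs_le
              (hHm.comp (measurable_id.prodMk measurable_const)).aestronglyMeasurable
              (fun zx => hHb (zx, s))
          rw [Measure.integral_compProd hHint2, Measure.integral_compProd hGint2]
          refine integral_congr_ae (ae_of_all _ fun z => ?_)
          show (∫ x, (if (z, s) ∈ B then Ψ (z, φ k (z, s)) else 0) ∂κ z)
              = ∫ x, (if (z, s) ∈ B then α0 (x, (z, φ k (z, s))) else 0) ∂κ z
          by_cases hzs : (z, s) ∈ B
          · simp only [if_pos hzs]
            rw [integral_const, probReal_univ]
            simp only [ENNReal.toReal_one, one_smul]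
            rfl
          · simp only [if_neg hzs, integral_zero]
      _ = ∫ p, G p ∂(P.map (fun ω => ((Z k ω, V ω), S0 ω))) := by
          rw [hmapR, hcomp]
      _ = ∫ ω, G ((Z k ω, V ω), S0 ω) ∂P :=
          integral_map hRm.aemeasurable hGm.aestronglyMeasurable
      _ = ∫ ω in (fun ω => (Z k ω, S0 ω)) ⁻¹' B, f ω ∂P := by
          rw [← integral_indicator hWB]
          exact (integral_congr_ae (ae_of_all _ hfeq)).symm
  -- conclusion via the tower property
  exact condexp_tower_of_version hm₁₂ hm₂₃ hm₃le hhint hhm1 hcond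
end

section
/- Suppose 𝒮 is a finite nonempty set (with the discrete σ-algebra) and F : 𝒳 × 𝒮 → 𝒮 is measurable. Then the pair process is stochastically stable: there exists a Borel probability measure v on 𝒳^ℤ × 𝒮 whose first marginal equals μ and which is invariant under the skew-product map Φ. -/
open MeasureTheory ProbabilityTheory Filter
open scoped ENNReal Topology

/-- The skew-product map `Φ(x, s) = (θx, F(x₀, s))` on `𝒳^ℤ × 𝒮`, where `θ` is the left
shift; iterating it from `(x, s₀)` realizes the recursion `S_{k+1} = F(X_k, S_k)`. -/
def skewProd {𝒳 𝒮 : Type*} (F : 𝒳 × 𝒮 → 𝒮) (p : (ℤ → 𝒳) × 𝒮) : (ℤ → 𝒳) × 𝒮 :=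
  (fun n => p.1 (n + 1), F (p.1 0, p.2))

/-- if the state space `𝒮` is finite nonempty (with the discrete σ-algebra)
and `F` is measurable, then the pair process is stochastically stable: there is a
probability measure on `𝒳^ℤ × 𝒮` with first marginal `μ` that is invariant under the
skew product `Φ`. -/
theorem stochastically_stable_of_finite_state
    {𝒳 : Type*} [TopologicalSpace 𝒳] [PolishSpace 𝒳] [MeasurableSpace 𝒳] [BorelSpace 𝒳]
    {𝒮 : Type*} [Fintype 𝒮] [Nonempty 𝒮] [MeasurableSpace 𝒮] [DiscreteMeasurableSpace 𝒮]
    (μ : Measure (ℤ → 𝒳)) [IsProbabilityMeasure μ]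
    (hμ : μ.map (fun x n => x (n + 1)) = μ)
    (F : 𝒳 × 𝒮 → 𝒮) (hF : Measurable F) :
    ∃ v : Measure ((ℤ → 𝒳) × 𝒮), IsProbabilityMeasure v ∧
      v.map Prod.fst = μ ∧ v.map (skewProd F) = v := by
  classical
  set Φ : (ℤ → 𝒳) × 𝒮 → (ℤ → 𝒳) × 𝒮 := skewProd F with hΦdef
  have hΦ : Measurable Φ := by
    apply Measurable.prod
    · exact measurable_pi_lambda _ (fun n => (measurable_pi_apply (n + 1)).comp measurable_fst)
    · exact hF.comp (((measurable_pi_apply 0).comp measurable_fst).prodMk measurable_snd)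
  have hΦit : ∀ n, Measurable (Φ^[n]) := hΦ.iterate
  obtain ⟨s₀⟩ := ‹Nonempty 𝒮›
  set v0 : Measure ((ℤ → 𝒳) × 𝒮) := μ.map (fun x => (x, s₀)) with hv0
  have hmeas0 : Measurable (fun x : ℤ → 𝒳 => (x, s₀)) := measurable_id.prodMk measurable_const
  set w : ℕ → Measure ((ℤ → 𝒳) × 𝒮) := fun n => v0.map (Φ^[n]) with hwdef
  have hwsucc : ∀ n, w (n + 1) = (w n).map Φ := by
    intro n
    simp only [hwdef]
    rw [Function.iterate_succ', Measure.map_map hΦ (hΦit n)]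
  have hwfst : ∀ n, (w n).map Prod.fst = μ := by
    intro n
    induction n with
    | zero =>
      simp only [hwdef, Function.iterate_zero, Measure.map_id]
      rw [hv0, Measure.map_map measurable_fst hmeas0]
      have : (Prod.fst ∘ fun x : ℤ → 𝒳 => (x, s₀)) = id := rfl
      rw [this, Measure.map_id]
    | succ n ih =>
      rw [hwsucc n, Measure.map_map measurable_fst hΦ]
      have hfstΦ : (Prod.fst ∘ Φ) = (fun x n => x (n + 1)) ∘ (Prod.fst :
          (ℤ → 𝒳) × 𝒮 → ℤ → 𝒳) := rfl
      rw [hfstΦ, ← Measure.map_map (measurable_pi_lambda _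
        (fun n => measurable_pi_apply (n + 1))) measurable_fst, ih, hμ]
  have hwuniv : ∀ n, w n Set.univ = 1 := by
    intro n
    have := congrArg (fun ν : Measure (ℤ → 𝒳) => ν Set.univ) (hwfst n)
    simp only [Measure.map_apply measurable_fst MeasurableSet.univ, Set.preimage_univ] at this
    simpa using this
  -- dominating finite measure ρ
  set ρ : Measure ((ℤ → 𝒳) × 𝒮) := ∑ s : 𝒮, μ.map (fun x => (x, s)) with hρdef
  have hmeass : ∀ s : 𝒮, Measurable (fun x : ℤ → 𝒳 => (x, s)) :=
    fun s => measurable_id.prodMk measurable_const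
  have hρ_apply : ∀ E : Set ((ℤ → 𝒳) × 𝒮), MeasurableSet E →
      ρ E = ∑ s : 𝒮, μ ((fun x => (x, s)) ⁻¹' E) := by
    intro E hE
    rw [hρdef, Measure.finset_sum_apply]
    exact Finset.sum_congr rfl fun s _ => Measure.map_apply (hmeass s) hE
  have hdomw : ∀ n (E : Set ((ℤ → 𝒳) × 𝒮)), MeasurableSet E → w n E ≤ ρ E := by
    intro n E hE
    have hcover : E ⊆ ⋃ s ∈ (Finset.univ : Finset 𝒮), ((fun x => (x, s)) ⁻¹' E) ×ˢ ({s} : Set 𝒮) := by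
      rintro ⟨x, t⟩ hxt
      exact Set.mem_biUnion (Finset.mem_univ t) ⟨hxt, rfl⟩
    calc w n E ≤ w n (⋃ s ∈ (Finset.univ : Finset 𝒮),
          ((fun x => (x, s)) ⁻¹' E) ×ˢ ({s} : Set 𝒮)) := measure_mono hcover
      _ ≤ ∑ s : 𝒮, w n (((fun x => (x, s)) ⁻¹' E) ×ˢ ({s} : Set 𝒮)) :=
          measure_biUnion_finset_le _ _
      _ ≤ ∑ s : 𝒮, μ ((fun x => (x, s)) ⁻¹' E) := by
          apply Finset.sum_le_sum
          intro s _
          have h1 : (((fun x => (x, s)) ⁻¹' E) ×ˢ ({s} : Set 𝒮)) ⊆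
              Prod.fst ⁻¹' ((fun x => (x, s)) ⁻¹' E) := fun p hp => hp.1
          calc w n (((fun x => (x, s)) ⁻¹' E) ×ˢ ({s} : Set 𝒮))
              ≤ w n (Prod.fst ⁻¹' ((fun x => (x, s)) ⁻¹' E)) := measure_mono h1
            _ = μ ((fun x => (x, s)) ⁻¹' E) := by
                rw [← Measure.map_apply measurable_fst ((hmeass s) hE), hwfst n]
      _ = ρ E := (hρ_apply E hE).symm
  have hρuniv : ρ Set.univ ≠ ⊤ := by
    rw [hρ_apply Set.univ MeasurableSet.univ]
    simp only [Set.preimage_univ, measure_univ]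
    simp
  -- Cesàro averages
  set vN : ℕ → Measure ((ℤ → 𝒳) × 𝒮) :=
    fun N => (N : ℝ≥0∞)⁻¹ • ∑ n ∈ Finset.range N, w n with hvNdef
  have hvN_apply : ∀ N (E : Set ((ℤ → 𝒳) × 𝒮)),
      vN N E = (N : ℝ≥0∞)⁻¹ * ∑ n ∈ Finset.range N, w n E := by
    intro N E
    rw [hvNdef]
    simp [Measure.smul_apply, Measure.finset_sum_apply, smul_eq_mul]
  have hvN_dom : ∀ N (E : Set ((ℤ → 𝒳) × 𝒮)), MeasurableSet E → vN N E ≤ ρ E := by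
    intro N E hE
    rcases Nat.eq_zero_or_pos N with h0 | hpos
    · simp [hvN_apply, h0]
    · rw [hvN_apply]
      calc (N : ℝ≥0∞)⁻¹ * ∑ n ∈ Finset.range N, w n E
          ≤ (N : ℝ≥0∞)⁻¹ * ∑ _n ∈ Finset.range N, ρ E := by
            gcongr (N : ℝ≥0∞)⁻¹ * ?_
            exact Finset.sum_le_sum fun n _ => hdomw n E hE
        _ = (N : ℝ≥0∞)⁻¹ * ((N : ℝ≥0∞) * ρ E) := by
            rw [Finset.sum_const, Finset.card_range, nsmul_eq_mul]
        _ = ρ E := by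
            rw [← mul_assoc, ENNReal.inv_mul_cancel (by exact_mod_cast hpos.ne')
              (ENNReal.natCast_ne_top N), one_mul]
  -- ultrafilter limit along N → ∞
  set U : Ultrafilter ℕ := Ultrafilter.of atTop with hUdef
  have hU : (U : Filter ℕ) ≤ atTop := Ultrafilter.of_le _
  set L : (ℕ → ℝ≥0∞) → ℝ≥0∞ := fun f => (U.map f).lim with hLdef
  have hL : ∀ f : ℕ → ℝ≥0∞, Tendsto f U (𝓝 (L f)) := by
    intro f
    have := (U.map f).le_nhds_lim
    rwa [Ultrafilter.coe_map] at this
  have hLtendsto : ∀ {f : ℕ → ℝ≥0∞} {c : ℝ≥0∞}, Tendsto f atTop (𝓝 c) → L f = c :=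
    fun {f c} h => tendsto_nhds_unique (hL f) (h.mono_left hU)
  have hLconst : ∀ c : ℝ≥0∞, L (fun _ => c) = c := fun c => hLtendsto tendsto_const_nhds
  have hLmono : ∀ {f g : ℕ → ℝ≥0∞}, (∀ N, f N ≤ g N) → L f ≤ L g :=
    fun {f g} h => le_of_tendsto_of_tendsto' (hL f) (hL g) h
  have hLadd : ∀ f g : ℕ → ℝ≥0∞, L (fun N => f N + g N) = L f + L g :=
    fun f g => tendsto_nhds_unique (hL _) ((hL f).add (hL g))
  have hLsum : ∀ {ι : Type} (t : Finset ι) (f : ι → ℕ → ℝ≥0∞),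
      L (fun N => ∑ i ∈ t, f i N) = ∑ i ∈ t, L (f i) :=
    fun {ι} t f => tendsto_nhds_unique (hL _) (tendsto_finset_sum t (fun i _ => hL (f i)))
  -- the limit set function
  set β : Set ((ℤ → 𝒳) × 𝒮) → ℝ≥0∞ := fun E => L (fun N => vN N E) with hβdef
  have hβ_dom : ∀ E, MeasurableSet E → β E ≤ ρ E := by
    intro E hE
    calc β E ≤ L (fun _ => ρ E) := hLmono (fun N => hvN_dom N E hE)
      _ = ρ E := hLconst _
  have hβ_empty : β ∅ = 0 := by
    have h0 : (fun N => vN N ∅) = fun _ => (0 : ℝ≥0∞) := funext fun N => by simp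
    simp only [hβdef]
    rw [h0]; exact hLconst 0
  have hβ_mono : ∀ {A B : Set ((ℤ → 𝒳) × 𝒮)}, A ⊆ B → β A ≤ β B :=
    fun {A B} h => hLmono (fun N => measure_mono h)
  have hβ_union : ∀ (A B : Set ((ℤ → 𝒳) × 𝒮)), MeasurableSet B → Disjoint A B →
      β (A ∪ B) = β A + β B := by
    intro A B hB hAB
    have : (fun N => vN N (A ∪ B)) = fun N => vN N A + vN N B :=
      funext fun N => measure_union hAB hB
    simp only [hβdef]
    rw [this]
    exact hLadd _ _
  -- countable additivity
  have hβ_iUnion : ∀ f : ℕ → Set ((ℤ → 𝒳) × 𝒮), (∀ i, MeasurableSet (f i)) →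
      Pairwise (Function.onFun Disjoint f) → β (⋃ i, f i) = ∑' i, β (f i) := by
    intro f hfm hfd
    have hβfin : ∀ k : ℕ, β (⋃ i ∈ Finset.range k, f i) = ∑ i ∈ Finset.range k, β (f i) := by
      intro k
      have hmeq : ∀ N, vN N (⋃ i ∈ Finset.range k, f i) = ∑ i ∈ Finset.range k, vN N (f i) := by
        intro N
        exact measure_biUnion_finset (fun i _ j _ hij => hfd hij) (fun i _ => hfm i)
      simp only [hβdef]
      simp only [hmeq]
      exact hLsum _ _
    -- tail sets
    set t : ℕ → Set ((ℤ → 𝒳) × 𝒮) := fun k => ⋃ i, f (k + i) with htdef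
    have htm : ∀ k, MeasurableSet (t k) := fun k => MeasurableSet.iUnion (fun i => hfm _)
    have htanti : Antitone t := by
      intro a b hab
      rintro x hx
      simp only [htdef, Set.mem_iUnion] at hx ⊢
      obtain ⟨i, hi⟩ := hx
      exact ⟨b - a + i, by rwa [← Nat.add_assoc, Nat.add_sub_cancel' hab]⟩
    have htint : (⋂ k, t k) = ∅ := by
      ext x
      simp only [Set.mem_iInter, Set.mem_empty_iff_false, iff_false]
      intro hx
      obtain ⟨i, hi⟩ := Set.mem_iUnion.1 (hx 0)
      obtain ⟨j, hj⟩ := Set.mem_iUnion.1 (hx (i + 1))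
      simp only [Nat.zero_add] at hi
      have hne : i ≠ i + 1 + j := by omega
      exact Set.disjoint_left.1 (hfd hne) hi hj
    have htends : Tendsto (fun k => ρ (t k)) atTop (𝓝 0) := by
      have := tendsto_measure_iInter_atTop (μ := ρ)
        (fun k => (htm k).nullMeasurableSet) htanti
        ⟨0, ne_top_of_le_ne_top hρuniv (measure_mono (Set.subset_univ _))⟩
      rw [htint] at this
      simpa [Function.comp_def] using this
    have hsplit : ∀ k, (⋃ i, f i) = (⋃ i ∈ Finset.range k, f i) ∪ t k := by
      intro k
      ext x
      simp only [Set.mem_iUnion, Set.mem_union, Finset.mem_range, htdef]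
      constructor
      · rintro ⟨i, hi⟩
        rcases lt_or_ge i k with h | h
        · exact Or.inl ⟨i, h, hi⟩
        · exact Or.inr ⟨i - k, by rwa [Nat.add_sub_cancel' h]⟩
      · rintro (⟨i, _, hi⟩ | ⟨i, hi⟩)
        · exact ⟨i, hi⟩
        · exact ⟨k + i, hi⟩
    have hdisj : ∀ k, Disjoint (⋃ i ∈ Finset.range k, f i) (t k) := by
      intro k
      rw [Set.disjoint_left]
      rintro x hx hx'
      simp only [Set.mem_iUnion, Finset.mem_range] at hx
      obtain ⟨i, hik, hi⟩ := hx
      obtain ⟨j, hj⟩ := Set.mem_iUnion.1 hx'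
      have hne : i ≠ k + j := by omega
      exact Set.disjoint_left.1 (hfd hne) hi hj
    apply le_antisymm
    · -- ≤ : use tails
      have hle : ∀ k, β (⋃ i, f i) ≤ (∑' i, β (f i)) + ρ (t k) := by
        intro k
        calc β (⋃ i, f i) = β ((⋃ i ∈ Finset.range k, f i) ∪ t k) := by rw [← hsplit k]
          _ = β (⋃ i ∈ Finset.range k, f i) + β (t k) := hβ_union _ _ (htm k) (hdisj k)
          _ = (∑ i ∈ Finset.range k, β (f i)) + β (t k) := by rw [hβfin k]
          _ ≤ (∑' i, β (f i)) + ρ (t k) :=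
              add_le_add (ENNReal.sum_le_tsum _) (hβ_dom _ (htm k))
      have : Tendsto (fun k => (∑' i, β (f i)) + ρ (t k)) atTop (𝓝 ((∑' i, β (f i)) + 0)) :=
        Tendsto.add tendsto_const_nhds htends
      rw [add_zero] at this
      exact ge_of_tendsto' this hle
    · -- ≥
      rw [ENNReal.tsum_eq_iSup_sum]
      apply iSup_le
      intro s
      obtain ⟨k, hk⟩ := s.exists_nat_subset_range
      calc ∑ i ∈ s, β (f i) ≤ ∑ i ∈ Finset.range k, β (f i) :=
            Finset.sum_le_sum_of_subset hk
        _ = β (⋃ i ∈ Finset.range k, f i) := (hβfin k).symm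
        _ ≤ β (⋃ i, f i) := hβ_mono (Set.iUnion₂_subset fun i _ => Set.subset_iUnion f i)
  -- the measure
  set v : Measure ((ℤ → 𝒳) × 𝒮) :=
    Measure.ofMeasurable (fun E _ => β E) hβ_empty
      (fun f hfm hfd => hβ_iUnion f hfm hfd) with hvdef
  have hv_apply : ∀ E : Set ((ℤ → 𝒳) × 𝒮), MeasurableSet E → v E = β E :=
    fun E hE => Measure.ofMeasurable_apply E hE
  -- probability
  have hvN_univ : ∀ N : ℕ, 1 ≤ N → vN N Set.univ = 1 := by
    intro N hN
    rw [hvN_apply]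
    have : ∑ n ∈ Finset.range N, w n Set.univ = (N : ℝ≥0∞) := by
      simp only [hwuniv, Finset.sum_const, Finset.card_range, nsmul_eq_mul, mul_one]
    rw [this, ENNReal.inv_mul_cancel (by exact_mod_cast Nat.one_le_iff_ne_zero.1 hN)
      (ENNReal.natCast_ne_top N)]
  have hprob : IsProbabilityMeasure v := by
    constructor
    rw [hv_apply _ MeasurableSet.univ]
    simp only [hβdef]
    have hev : (fun N => vN N Set.univ) =ᶠ[atTop] fun _ => (1 : ℝ≥0∞) :=
      eventually_atTop.2 ⟨1, fun N hN => hvN_univ N hN⟩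
    exact hLtendsto (Tendsto.congr' hev.symm tendsto_const_nhds)
  -- first marginal
  have hfst : v.map Prod.fst = μ := by
    apply Measure.ext
    intro A hA
    rw [Measure.map_apply measurable_fst hA, hv_apply _ (measurable_fst hA)]
    simp only [hβdef]
    have hev : (fun N => vN N (Prod.fst ⁻¹' A)) =ᶠ[atTop] fun _ => μ A := by
      refine eventually_atTop.2 ⟨1, fun N hN => ?_⟩
      show vN N (Prod.fst ⁻¹' A) = μ A
      rw [hvN_apply]
      have hterm : ∀ n, w n (Prod.fst ⁻¹' A) = μ A := by
        intro n
        rw [← Measure.map_apply measurable_fst hA, hwfst n]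
      simp only [hterm, Finset.sum_const, Finset.card_range, nsmul_eq_mul]
      rw [← mul_assoc, ENNReal.inv_mul_cancel (by exact_mod_cast Nat.one_le_iff_ne_zero.1 hN)
        (ENNReal.natCast_ne_top N), one_mul]
    exact hLtendsto (Tendsto.congr' hev.symm tendsto_const_nhds)
  -- invariance
  have hinv : v.map Φ = v := by
    apply Measure.ext
    intro E hE
    rw [Measure.map_apply hΦ hE, hv_apply _ (hΦ hE), hv_apply _ hE]
    simp only [hβdef]
    have hwE : ∀ n, w n (Φ ⁻¹' E) = w (n + 1) E := by
      intro n
      rw [← Measure.map_apply hΦ hE, ← hwsucc n]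
    have hkey : ∀ N, ∑ n ∈ Finset.range N, w (n + 1) E + w 0 E
        = ∑ n ∈ Finset.range N, w n E + w N E := by
      intro N
      exact (Finset.sum_range_succ' (fun n => w n E) N).symm.trans
        (Finset.sum_range_succ (fun n => w n E) N)
    have h1 : ∀ N, vN N (Φ ⁻¹' E) ≤ vN N E + (N : ℝ≥0∞)⁻¹ := by
      intro N
      rw [hvN_apply, hvN_apply]
      simp only [hwE]
      calc (N : ℝ≥0∞)⁻¹ * ∑ n ∈ Finset.range N, w (n + 1) E
          ≤ (N : ℝ≥0∞)⁻¹ * (∑ n ∈ Finset.range N, w (n + 1) E + w 0 E) := by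
            gcongr; exact le_self_add
        _ = (N : ℝ≥0∞)⁻¹ * (∑ n ∈ Finset.range N, w n E + w N E) := by rw [hkey N]
        _ ≤ (N : ℝ≥0∞)⁻¹ * (∑ n ∈ Finset.range N, w n E + 1) := by
            gcongr
            calc w N E ≤ w N Set.univ := measure_mono (Set.subset_univ _)
              _ = 1 := hwuniv N
        _ = (N : ℝ≥0∞)⁻¹ * ∑ n ∈ Finset.range N, w n E + (N : ℝ≥0∞)⁻¹ := by
            rw [mul_add, mul_one]
    have h2 : ∀ N, vN N E ≤ vN N (Φ ⁻¹' E) + (N : ℝ≥0∞)⁻¹ := by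
      intro N
      rw [hvN_apply, hvN_apply]
      simp only [hwE]
      calc (N : ℝ≥0∞)⁻¹ * ∑ n ∈ Finset.range N, w n E
          ≤ (N : ℝ≥0∞)⁻¹ * (∑ n ∈ Finset.range N, w n E + w N E) := by
            gcongr; exact le_self_add
        _ = (N : ℝ≥0∞)⁻¹ * (∑ n ∈ Finset.range N, w (n + 1) E + w 0 E) := by rw [hkey N]
        _ ≤ (N : ℝ≥0∞)⁻¹ * (∑ n ∈ Finset.range N, w (n + 1) E + 1) := by
            gcongr
            calc w 0 E ≤ w 0 Set.univ := measure_mono (Set.subset_univ _)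
              _ = 1 := hwuniv 0
        _ = (N : ℝ≥0∞)⁻¹ * ∑ n ∈ Finset.range N, w (n + 1) E + (N : ℝ≥0∞)⁻¹ := by
            rw [mul_add, mul_one]
    have hLinv : L (fun N => (N : ℝ≥0∞)⁻¹) = 0 := hLtendsto ENNReal.tendsto_inv_nat_nhds_zero
    apply le_antisymm
    · calc L (fun N => vN N (Φ ⁻¹' E)) ≤ L (fun N => vN N E + (N : ℝ≥0∞)⁻¹) := hLmono h1
        _ = L (fun N => vN N E) + L (fun N => (N : ℝ≥0∞)⁻¹) := hLadd _ _
        _ = L (fun N => vN N E) := by rw [hLinv, add_zero]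
    · calc L (fun N => vN N E) ≤ L (fun N => vN N (Φ ⁻¹' E) + (N : ℝ≥0∞)⁻¹) := hLmono h2
        _ = L (fun N => vN N (Φ ⁻¹' E)) + L (fun N => (N : ℝ≥0∞)⁻¹) := hLadd _ _
        _ = L (fun N => vN N (Φ ⁻¹' E)) := by rw [hLinv, add_zero]
  exact ⟨v, hprob, hfst, hinv⟩
end

section
/- Suppose 𝒮 ⊆ ℝ is a countable, uniformly discrete set (there exists r > 0 with |s − s'| ≥ r for all distinct s, s' ∈ 𝒮), equipped with its Borel σ-algebra, and F : 𝒳 × 𝒮 → 𝒮 is measurable. Fix s₀ ∈ 𝒮 and suppose the Cesàro tightness condition holds: lim_{M→∞} limsup_{T→∞} (1/T) Σ_{k=0}^{T−1} μ{x ∈ 𝒳^ℤ : |S_k(x, s₀)| ≥ M} = 0. Then the pair process is stochastically stable: there exists a Borel probability measure v on 𝒳^ℤ × 𝒮 whose first marginal equals μ and which is Φ-invariant. -/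
open MeasureTheory ProbabilityTheory Filter
open scoped ENNReal NNReal

set_option linter.unusedSectionVars false
set_option linter.unusedVariables false
set_option maxHeartbeats 1000000

open Set
noncomputable def UF : Ultrafilter ℕ := Ultrafilter.of atTop
lemma UF_le : (UF : Filter ℕ) ≤ atTop := Ultrafilter.of_le _
noncomputable def Ulim (f : ℕ → ℝ≥0∞) : ℝ≥0∞ := (UF.map f).lim
lemma tendsto_Ulim (f : ℕ → ℝ≥0∞) : Tendsto f (UF : Filter ℕ) (nhds (Ulim f)) :=
  (UF.map f).le_nhds_lim
lemma Ulim_eq {f : ℕ → ℝ≥0∞} {a : ℝ≥0∞} (h : Tendsto f (UF : Filter ℕ) (nhds a)) :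
    Ulim f = a := tendsto_nhds_unique (tendsto_Ulim f) h
lemma Ulim_const (c : ℝ≥0∞) : Ulim (fun _ => c) = c := Ulim_eq tendsto_const_nhds
lemma Ulim_congr {f g : ℕ → ℝ≥0∞} (h : ∀ᶠ T in atTop, f T = g T) : Ulim f = Ulim g :=
  Ulim_eq ((tendsto_Ulim g).congr' (Eventually.mono (h.filter_mono UF_le) fun _ e => e.symm))
lemma Ulim_mono {f g : ℕ → ℝ≥0∞} (h : ∀ᶠ T in atTop, f T ≤ g T) : Ulim f ≤ Ulim g :=
  le_of_tendsto_of_tendsto (tendsto_Ulim f) (tendsto_Ulim g) (h.filter_mono UF_le)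
lemma Ulim_add (f g : ℕ → ℝ≥0∞) : Ulim (fun T => f T + g T) = Ulim f + Ulim g :=
  Ulim_eq ((tendsto_Ulim f).add (tendsto_Ulim g))
lemma Ulim_sum {ι : Type*} (t : Finset ι) (f : ι → ℕ → ℝ≥0∞) :
    Ulim (fun T => ∑ i ∈ t, f i T) = ∑ i ∈ t, Ulim (f i) :=
  Ulim_eq (tendsto_finset_sum t fun i _ => tendsto_Ulim (f i))
lemma Ulim_le_add {f g h : ℕ → ℝ≥0∞} (hle : ∀ᶠ T in atTop, f T ≤ g T + h T) :
    Ulim f ≤ Ulim g + Ulim h := by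
  calc Ulim f ≤ Ulim (fun T => g T + h T) := Ulim_mono hle
  _ = _ := Ulim_add g h
lemma Ulim_invT : Ulim (fun T : ℕ => (T : ℝ≥0∞)⁻¹) = 0 :=
  Ulim_eq (ENNReal.tendsto_inv_nat_nhds_zero.mono_left UF_le)

section Aux
variable {Ω 𝒮 : Type*} [MeasurableSpace Ω] [MeasurableSpace 𝒮]
  [Countable 𝒮] [MeasurableSingletonClass 𝒮]
  (μ : Measure Ω) [IsProbabilityMeasure μ]
  (Φ : Ω × 𝒮 → Ω × 𝒮)
  (m : Measure (Ω × 𝒮)) [IsProbabilityMeasure m]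

/-- Cesàro average of `m(Φ^{-k} E)`. -/
noncomputable def aT (E : Set (Ω × 𝒮)) (T : ℕ) : ℝ≥0∞ :=
  (T : ℝ≥0∞)⁻¹ * ∑ k ∈ Finset.range T, m (Φ^[k] ⁻¹' E)

variable {Φ m}

lemma aT_mono {E E' : Set (Ω × 𝒮)} (h : E ⊆ E') (T : ℕ) : aT Φ m E T ≤ aT Φ m E' T :=
  mul_le_mul_right (Finset.sum_le_sum fun k _ => measure_mono (preimage_mono h)) _

lemma aT_zero (E : Set (Ω × 𝒮)) : aT Φ m E 0 = 0 := by simp [aT]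

lemma aT_empty (T : ℕ) : aT Φ m ∅ T = 0 := by simp [aT]

lemma aT_union_le (E E' : Set (Ω × 𝒮)) (T : ℕ) :
    aT Φ m (E ∪ E') T ≤ aT Φ m E T + aT Φ m E' T := by
  simp only [aT]
  rw [← mul_add, ← Finset.sum_add_distrib]
  refine mul_le_mul_right (Finset.sum_le_sum fun k _ => ?_) _
  rw [preimage_union]
  exact measure_union_le _ _

lemma aT_biUnion_le {ι : Type*} (t : Finset ι) (Es : ι → Set (Ω × 𝒮)) (T : ℕ) :
    aT Φ m (⋃ i ∈ t, Es i) T ≤ ∑ i ∈ t, aT Φ m (Es i) T := by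
  classical
  induction t using Finset.induction with
  | empty => simp [aT_empty]
  | insert a s hni ih =>
      rw [Finset.set_biUnion_insert, Finset.sum_insert hni]
      exact (aT_union_le _ _ _).trans (add_le_add_right ih _)

lemma aT_biUnion (hΦ : Measurable Φ) {ι : Type*} (t : Finset ι) (Es : ι → Set (Ω × 𝒮))
    (hmeas : ∀ i ∈ t, MeasurableSet (Es i))
    (hdisj : (t : Set ι).PairwiseDisjoint Es) (T : ℕ) :
    aT Φ m (⋃ i ∈ t, Es i) T = ∑ i ∈ t, aT Φ m (Es i) T := by
  have hk : ∀ k, m (Φ^[k] ⁻¹' (⋃ i ∈ t, Es i)) = ∑ i ∈ t, m (Φ^[k] ⁻¹' Es i) := by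
    intro k
    rw [preimage_iUnion₂]
    exact measure_biUnion_finset
      (fun i hi j hj hij => (hdisj hi hj hij).preimage _)
      (fun i hi => (hΦ.iterate k) (hmeas i hi))
  simp only [aT, hk, Finset.mul_sum, Finset.sum_comm (s := Finset.range T)]


lemma aT_marg (hm : ∀ (k : ℕ) (A : Set Ω), MeasurableSet A → m (Φ^[k] ⁻¹' (A ×ˢ univ)) = μ A)
    {A : Set Ω} (hA : MeasurableSet A) {T : ℕ} (hT : 1 ≤ T) :
    aT Φ m (A ×ˢ univ) T = μ A := by
  simp only [aT]
  rw [Finset.sum_congr rfl fun k _ => hm k A hA, Finset.sum_const, Finset.card_range,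
    nsmul_eq_mul, ← mul_assoc,
    ENNReal.inv_mul_cancel (by exact_mod_cast Nat.one_le_iff_ne_zero.mp hT) (by simp), one_mul]

lemma aT_dom (hm : ∀ (k : ℕ) (A : Set Ω), MeasurableSet A → m (Φ^[k] ⁻¹' (A ×ˢ univ)) = μ A)
    {B : Set (Ω × 𝒮)} {A : Set Ω} (hA : MeasurableSet A)
    (hBA : B ⊆ A ×ˢ univ) (T : ℕ) : aT Φ m B T ≤ μ A := by
  rcases Nat.eq_zero_or_pos T with rfl | hT
  · simp [aT_zero]
  · exact (aT_mono hBA T).trans_eq (aT_marg μ hm hA hT)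


theorem aux_invariant
    (hΦ : Measurable Φ)
    (hm : ∀ (k : ℕ) (A : Set Ω), MeasurableSet A → m (Φ^[k] ⁻¹' (A ×ˢ univ)) = μ A)
    (bad : ℕ → Set 𝒮) (hbadm : ∀ M, MeasurableSet (bad M))
    (hbadfin : ∀ M, (bad M)ᶜ.Finite)
    (hbadsmall : ∀ ε : ℝ≥0∞, 0 < ε → ∃ M,
      Ulim (fun T => aT Φ m (univ ×ˢ bad M) T) ≤ ε) :
    ∃ v : Measure (Ω × 𝒮), IsProbabilityMeasure v ∧ v.map Prod.fst = μ ∧ v.map Φ = v := by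
  classical
  -- the fibre measures
  have hmk : ∀ s : 𝒮, Measurable fun x : Ω => (x, s) := fun s => measurable_prodMk_right
  have hprod_meas : ∀ (A : Set Ω) (s : 𝒮), MeasurableSet A → MeasurableSet (A ×ˢ ({s} : Set 𝒮)) :=
    fun A s hA => hA.prod (measurableSet_singleton s)
  set ν : 𝒮 → Measure Ω := fun s => Measure.ofMeasurable
    (fun A _ => Ulim (fun T => aT Φ m (A ×ˢ ({s} : Set 𝒮)) T))
    (by simp only [Set.empty_prod, aT_empty]; exact Ulim_const 0)
    (by
      intro f hf hd
      have hunion : (⋃ i, f i) ×ˢ ({s} : Set 𝒮) = ⋃ i, (f i ×ˢ ({s} : Set 𝒮)) := by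
        rw [Set.iUnion_prod_const]
      show Ulim (fun T => aT Φ m ((⋃ i, f i) ×ˢ ({s} : Set 𝒮)) T)
          = ∑' i, Ulim (fun T => aT Φ m ((f i) ×ˢ ({s} : Set 𝒮)) T)
      have hdisj : Pairwise (Function.onFun Disjoint fun i => (f i) ×ˢ ({s} : Set 𝒮)) :=
        fun i j hij => Set.disjoint_prod.mpr (Or.inl (hd hij))
      have htot : ∑' i, μ (f i) ≠ ∞ :=
        (measure_iUnion hd hf ▸ measure_ne_top μ _ : _)
      apply le_antisymm
      · -- LHS ≤ tsum : split off finitely many, tail dominated by μ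
        have hbound : ∀ N : ℕ, Ulim (fun T => aT Φ m ((⋃ i, f i) ×ˢ ({s} : Set 𝒮)) T)
            ≤ (∑ i ∈ Finset.range N, Ulim (fun T => aT Φ m ((f i) ×ˢ ({s} : Set 𝒮)) T))
              + μ (⋃ i, f (i + N)) := by
          intro N
          have hsub : (⋃ i, f i) ×ˢ ({s} : Set 𝒮) ⊆
              (⋃ i ∈ Finset.range N, (f i) ×ˢ ({s} : Set 𝒮)) ∪
                ((⋃ i, f (i + N)) ×ˢ ({s} : Set 𝒮)) := by
            rintro ⟨x, t⟩ ⟨hx, ht⟩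
            simp only [Set.mem_iUnion, Set.mem_prod] at hx ⊢
            obtain ⟨i, hi⟩ := hx
            rcases lt_or_ge i N with hiN | hiN
            · exact Or.inl (Set.mem_iUnion₂.mpr ⟨i, Finset.mem_range.mpr hiN, hi, ht⟩)
            · exact Or.inr ⟨Set.mem_iUnion.mpr ⟨i - N, by rwa [Nat.sub_add_cancel hiN]⟩, ht⟩
          have hT : ∀ T, aT Φ m ((⋃ i, f i) ×ˢ ({s} : Set 𝒮)) T
              ≤ (∑ i ∈ Finset.range N, aT Φ m ((f i) ×ˢ ({s} : Set 𝒮)) T)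
                + μ (⋃ i, f (i + N)) := by
            intro T
            refine (aT_mono hsub T).trans ?_
            refine (aT_union_le _ _ T).trans (add_le_add (aT_biUnion_le _ _ T) ?_)
            exact aT_dom μ hm (MeasurableSet.iUnion fun i => hf (i + N)) (prod_subset_prod_iff.mpr (Or.inl ⟨le_rfl, subset_univ _⟩)) T
          calc Ulim (fun T => aT Φ m ((⋃ i, f i) ×ˢ ({s} : Set 𝒮)) T)
              ≤ Ulim (fun T => (∑ i ∈ Finset.range N, aT Φ m ((f i) ×ˢ ({s} : Set 𝒮)) T)
                + μ (⋃ i, f (i + N))) := Ulim_mono (Eventually.of_forall hT)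
            _ = _ := by
                rw [Ulim_add, Ulim_sum, Ulim_const]
        have htail : Tendsto (fun N => (∑ i ∈ Finset.range N,
            Ulim (fun T => aT Φ m ((f i) ×ˢ ({s} : Set 𝒮)) T)) + μ (⋃ i, f (i + N))) atTop
            (nhds ((∑' i, Ulim (fun T => aT Φ m ((f i) ×ˢ ({s} : Set 𝒮)) T)) + 0)) := by
          apply Tendsto.add (ENNReal.tendsto_nat_tsum _)
          have h1 : Tendsto (fun N => ∑' i, μ (f (i + N))) atTop (nhds 0) :=
            ENNReal.tendsto_sum_nat_add _ htot
          have h2 : ∀ N, μ (⋃ i, f (i + N)) ≤ ∑' i, μ (f (i + N)) :=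
            fun N => measure_iUnion_le _
          exact tendsto_of_tendsto_of_tendsto_of_le_of_le tendsto_const_nhds h1
            (fun N => zero_le) h2
        simpa using ge_of_tendsto' htail hbound
      · -- tsum ≤ LHS
        refine tsum_le_of_sum_le' zero_le fun t => ?_
        have heq : ∀ T, ∑ i ∈ t, aT Φ m ((f i) ×ˢ ({s} : Set 𝒮)) T
            = aT Φ m (⋃ i ∈ t, (f i) ×ˢ ({s} : Set 𝒮)) T := fun T =>
          (aT_biUnion hΦ t _ (fun i _ => hprod_meas _ _ (hf i))
            (fun i _ j _ hij => hdisj hij) T).symm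
        calc ∑ i ∈ t, Ulim (fun T => aT Φ m ((f i) ×ˢ ({s} : Set 𝒮)) T)
            = Ulim (fun T => ∑ i ∈ t, aT Φ m ((f i) ×ˢ ({s} : Set 𝒮)) T) := (Ulim_sum t _).symm
          _ ≤ Ulim (fun T => aT Φ m ((⋃ i, f i) ×ˢ ({s} : Set 𝒮)) T) := by
              refine Ulim_mono (Eventually.of_forall fun T => ?_)
              rw [heq T]
              exact aT_mono (Set.iUnion₂_subset fun i _ =>
                Set.prod_mono (Set.subset_iUnion f i) le_rfl) T) with hνdef
  have hν : ∀ (s : 𝒮) (A : Set Ω), MeasurableSet A →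
      ν s A = Ulim (fun T => aT Φ m (A ×ˢ ({s} : Set 𝒮)) T) := by
    intro s A hA
    rw [hνdef]
    exact Measure.ofMeasurable_apply A hA
  -- sections of a measurable set
  have hsect_prod : ∀ (E : Set (Ω × 𝒮)) (s : 𝒮),
      ((fun x : Ω => (x, s)) ⁻¹' E) ×ˢ ({s} : Set 𝒮) = E ∩ (univ ×ˢ ({s} : Set 𝒮)) := by
    intro E s; ext ⟨x, t⟩
    simp only [Set.mem_prod, Set.mem_preimage, Set.mem_inter_iff, Set.mem_singleton_iff,
      Set.mem_univ, true_and]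
    constructor
    · rintro ⟨hE, rfl⟩; exact ⟨hE, rfl⟩
    · rintro ⟨hE, rfl⟩; exact ⟨hE, rfl⟩
  have hνsect : ∀ (E : Set (Ω × 𝒮)) (s : 𝒮), MeasurableSet E →
      ν s ((fun x : Ω => (x, s)) ⁻¹' E)
        = Ulim (fun T => aT Φ m (E ∩ (univ ×ˢ ({s} : Set 𝒮))) T) := fun E s hE => by
    rw [hν s _ ((hmk s) hE), hsect_prod]
  have hsliced_meas : ∀ (E : Set (Ω × 𝒮)) (s : 𝒮), MeasurableSet E →
      MeasurableSet (E ∩ (univ ×ˢ ({s} : Set 𝒮))) := fun E s hE =>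
    hE.inter (MeasurableSet.univ.prod (measurableSet_singleton s))
  have hsliced_disj : ∀ (E : Set (Ω × 𝒮)), Pairwise (Function.onFun Disjoint
      fun s : 𝒮 => E ∩ (univ ×ˢ ({s} : Set 𝒮))) := by
    intro E s s' hss'
    exact Disjoint.mono Set.inter_subset_right Set.inter_subset_right
      (Set.disjoint_prod.mpr (Or.inr (disjoint_singleton.mpr hss')))
  -- the key identity
  have key : ∀ E : Set (Ω × 𝒮), MeasurableSet E →
      ∑' s : 𝒮, ν s ((fun x : Ω => (x, s)) ⁻¹' E) = Ulim (fun T => aT Φ m E T) := by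
    intro E hE
    apply le_antisymm
    · refine tsum_le_of_sum_le' zero_le fun J => ?_
      have heq : ∀ T, ∑ s ∈ J, aT Φ m (E ∩ (univ ×ˢ ({s} : Set 𝒮))) T
          = aT Φ m (⋃ s ∈ J, E ∩ (univ ×ˢ ({s} : Set 𝒮))) T := fun T =>
        (aT_biUnion hΦ J _ (fun s _ => hsliced_meas E s hE)
          (fun s _ s' _ hss' => hsliced_disj E hss') T).symm
      calc ∑ s ∈ J, ν s ((fun x : Ω => (x, s)) ⁻¹' E)
          = ∑ s ∈ J, Ulim (fun T => aT Φ m (E ∩ (univ ×ˢ ({s} : Set 𝒮))) T) :=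
            Finset.sum_congr rfl fun s _ => hνsect E s hE
        _ = Ulim (fun T => ∑ s ∈ J, aT Φ m (E ∩ (univ ×ˢ ({s} : Set 𝒮))) T) :=
            (Ulim_sum J _).symm
        _ ≤ Ulim (fun T => aT Φ m E T) := by
            refine Ulim_mono (Eventually.of_forall fun T => ?_)
            rw [heq T]
            exact aT_mono (Set.iUnion₂_subset fun s _ => Set.inter_subset_left) T
    · refine ENNReal.le_of_forall_pos_le_add fun ε hε _ => ?_
      obtain ⟨M, hM⟩ := hbadsmall ε (by exact_mod_cast hε)
      set J : Finset 𝒮 := (hbadfin M).toFinset with hJ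
      have hsub : E ⊆ (⋃ s ∈ J, E ∩ (univ ×ˢ ({s} : Set 𝒮))) ∪ (univ ×ˢ bad M) := by
        rintro ⟨x, t⟩ hxt
        by_cases ht : t ∈ bad M
        · exact Or.inr ⟨Set.mem_univ x, ht⟩
        · refine Or.inl (Set.mem_iUnion₂.mpr ⟨t, ?_, hxt, Set.mem_univ x, rfl⟩)
          rw [hJ, Set.Finite.mem_toFinset]
          exact ht
      have hT : ∀ T, aT Φ m E T ≤
          (∑ s ∈ J, aT Φ m (E ∩ (univ ×ˢ ({s} : Set 𝒮))) T) + aT Φ m (univ ×ˢ bad M) T :=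
        fun T => (aT_mono hsub T).trans ((aT_union_le _ _ T).trans
          (add_le_add_left (aT_biUnion_le _ _ T) _))
      calc Ulim (fun T => aT Φ m E T)
          ≤ Ulim (fun T => ∑ s ∈ J, aT Φ m (E ∩ (univ ×ˢ ({s} : Set 𝒮))) T)
            + Ulim (fun T => aT Φ m (univ ×ˢ bad M) T) :=
            Ulim_le_add (Eventually.of_forall hT)
        _ ≤ (∑' s : 𝒮, ν s ((fun x : Ω => (x, s)) ⁻¹' E)) + ε := by
            refine add_le_add ?_ hM
            rw [Ulim_sum]
            refine le_trans (Finset.sum_le_sum fun s _ => le_of_eq (hνsect E s hE).symm) ?_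
            exact ENNReal.sum_le_tsum J
  -- the candidate invariant measure
  set v : Measure (Ω × 𝒮) := Measure.sum (fun s : 𝒮 => (ν s).map (fun x : Ω => (x, s)))
    with hvdef
  have hv_apply : ∀ E : Set (Ω × 𝒮), MeasurableSet E →
      v E = ∑' s : 𝒮, ν s ((fun x : Ω => (x, s)) ⁻¹' E) := by
    intro E hE
    rw [hvdef, Measure.sum_apply _ hE]
    exact tsum_congr fun s => Measure.map_apply (hmk s) hE
  have hvE : ∀ E : Set (Ω × 𝒮), MeasurableSet E → v E = Ulim (fun T => aT Φ m E T) :=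
    fun E hE => (hv_apply E hE).trans (key E hE)
  have huniv : Ulim (fun T => aT Φ m (univ : Set (Ω × 𝒮)) T) = 1 := by
    have h1 : ∀ᶠ T in atTop, aT Φ m (univ : Set (Ω × 𝒮)) T = 1 :=
      (eventually_ge_atTop 1).mono fun T hT => by
        rw [← Set.univ_prod_univ, aT_marg μ hm MeasurableSet.univ hT, measure_univ]
    exact (Ulim_congr h1).trans (Ulim_const 1)
  have hvP : IsProbabilityMeasure v := ⟨(hvE univ MeasurableSet.univ).trans huniv⟩
  have hfst : v.map Prod.fst = μ := by
    refine Measure.ext fun A hA => ?_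
    rw [Measure.map_apply measurable_fst hA, ← Set.prod_univ,
      hvE _ (hA.prod MeasurableSet.univ)]
    exact (Ulim_congr ((eventually_ge_atTop 1).mono fun T hT =>
      aT_marg μ hm hA hT)).trans (Ulim_const _)
  have hinv : v.map Φ = v := by
    refine Measure.ext fun E hE => ?_
    rw [Measure.map_apply hΦ hE, hvE _ (hΦ hE), hvE _ hE]
    have hc : ∀ k : ℕ, Φ^[k] ⁻¹' (Φ ⁻¹' E) = Φ^[k + 1] ⁻¹' E := by
      intro k
      rw [Function.iterate_succ']
      exact (Set.preimage_comp).symm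
    have hshift : ∀ T : ℕ, (∑ k ∈ Finset.range T, m (Φ^[k] ⁻¹' (Φ ⁻¹' E))) + m E
        = (∑ k ∈ Finset.range T, m (Φ^[k] ⁻¹' E)) + m (Φ^[T] ⁻¹' E) := by
      intro T
      have h0 : m E = m (Φ^[0] ⁻¹' E) := by simp
      rw [Finset.sum_congr rfl fun k _ => congrArg m (hc k), h0,
        ← Finset.sum_range_succ' (fun k => m (Φ^[k] ⁻¹' E)) T, Finset.sum_range_succ]
    have h1 : ∀ T, aT Φ m (Φ ⁻¹' E) T ≤ aT Φ m E T + (T : ℝ≥0∞)⁻¹ := by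
      intro T
      have hA' : (∑ k ∈ Finset.range T, m (Φ^[k] ⁻¹' (Φ ⁻¹' E)))
          ≤ (∑ k ∈ Finset.range T, m (Φ^[k] ⁻¹' E)) + m (Φ^[T] ⁻¹' E) :=
        (le_add_right le_rfl).trans_eq (hshift T)
      calc aT Φ m (Φ ⁻¹' E) T
          ≤ (T : ℝ≥0∞)⁻¹ * ((∑ k ∈ Finset.range T, m (Φ^[k] ⁻¹' E)) + m (Φ^[T] ⁻¹' E)) :=
            mul_le_mul_right hA' _
        _ = aT Φ m E T + (T : ℝ≥0∞)⁻¹ * m (Φ^[T] ⁻¹' E) := by rw [mul_add]; rfl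
        _ ≤ aT Φ m E T + (T : ℝ≥0∞)⁻¹ * 1 := by
            exact add_le_add_right (mul_le_mul_right prob_le_one _) _
        _ = aT Φ m E T + (T : ℝ≥0∞)⁻¹ := by rw [mul_one]
    have h2 : ∀ T, aT Φ m E T ≤ aT Φ m (Φ ⁻¹' E) T + (T : ℝ≥0∞)⁻¹ := by
      intro T
      have hA : (∑ k ∈ Finset.range T, m (Φ^[k] ⁻¹' E))
          ≤ (∑ k ∈ Finset.range T, m (Φ^[k] ⁻¹' (Φ ⁻¹' E))) + m E :=
        (le_add_right le_rfl).trans_eq (hshift T).symm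
      calc aT Φ m E T
          ≤ (T : ℝ≥0∞)⁻¹ * ((∑ k ∈ Finset.range T, m (Φ^[k] ⁻¹' (Φ ⁻¹' E))) + m E) :=
            mul_le_mul_right hA _
        _ = aT Φ m (Φ ⁻¹' E) T + (T : ℝ≥0∞)⁻¹ * m E := by rw [mul_add]; rfl
        _ ≤ aT Φ m (Φ ⁻¹' E) T + (T : ℝ≥0∞)⁻¹ * 1 :=
            add_le_add_right (mul_le_mul_right prob_le_one _) _
        _ = aT Φ m (Φ ⁻¹' E) T + (T : ℝ≥0∞)⁻¹ := by rw [mul_one]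
    apply le_antisymm
    · exact (Ulim_le_add (Eventually.of_forall h1)).trans (by rw [Ulim_invT, add_zero])
    · exact (Ulim_le_add (Eventually.of_forall h2)).trans (by rw [Ulim_invT, add_zero])
  exact ⟨v, hvP, hfst, hinv⟩

end Aux


lemma skewProd_iterate_fst {𝒳 𝒮 : Type*} (F : 𝒳 × 𝒮 → 𝒮) (k : ℕ) (x : ℤ → 𝒳) (s : 𝒮) :
    ((skewProd F)^[k] (x, s)).1 = fun n => x (n + (k : ℤ)) := by
  induction k generalizing x s with
  | zero => simp
  | succ k ih =>
      rw [Function.iterate_succ_apply]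
      show ((skewProd F)^[k] ((fun n => x (n + 1)), F (x 0, s))).1 = _
      rw [ih]
      funext n
      congr 1
      push_cast
      ring

lemma measurable_shiftk {𝒳 : Type*} [MeasurableSpace 𝒳] (k : ℤ) :
    Measurable (fun (x : ℤ → 𝒳) (n : ℤ) => x (n + k)) :=
  measurable_pi_lambda _ fun n => measurable_pi_apply (n + k)

lemma map_shiftk {𝒳 : Type*} [MeasurableSpace 𝒳] (μ : Measure (ℤ → 𝒳))
    (hμ : μ.map (fun x n => x (n + 1)) = μ) (k : ℕ) :
    μ.map (fun (x : ℤ → 𝒳) (n : ℤ) => x (n + (k : ℤ))) = μ := by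
  induction k with
  | zero =>
      have : (fun (x : ℤ → 𝒳) (n : ℤ) => x (n + ((0 : ℕ) : ℤ))) = id := by
        funext x n; simp
      rw [this, Measure.map_id]
  | succ k ih =>
      have hcomp : (fun (x : ℤ → 𝒳) (n : ℤ) => x (n + ((k + 1 : ℕ) : ℤ)))
          = (fun (y : ℤ → 𝒳) (n : ℤ) => y (n + 1)) ∘ (fun (x : ℤ → 𝒳) (n : ℤ) => x (n + (k : ℤ))) := by
        funext x n
        show x (n + ((k+1 : ℕ) : ℤ)) = x (n + 1 + (k : ℤ))
        congr 1
        push_cast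
        ring
      rw [hcomp, ← Measure.map_map (measurable_shiftk 1) (measurable_shiftk (k : ℤ)), ih, hμ]

-- uniform discreteness gives finiteness of bounded pieces
lemma finite_ball (S : Set ℝ) (r : ℝ) (hr : 0 < r)
    (hsep : ∀ s ∈ S, ∀ s' ∈ S, s ≠ s' → r ≤ |s - s'|) (M : ℝ) :
    {s : ↥S | |(s : ℝ)| < M}.Finite := by
  have hinj : Function.Injective (fun s : ↥S => ⌊(s : ℝ) / r⌋) := by
    intro s s' h
    by_contra hne
    have hvne : (s : ℝ) ≠ (s' : ℝ) := fun hv => hne (Subtype.ext hv)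
    have hsep' := hsep s s.2 s' s'.2 hvne
    have h1 : |(s : ℝ) / r - (s' : ℝ) / r| < 1 := by
      have ha := Int.floor_le ((s : ℝ) / r)
      have hb := Int.lt_floor_add_one ((s : ℝ) / r)
      have ha' := Int.floor_le ((s' : ℝ) / r)
      have hb' := Int.lt_floor_add_one ((s' : ℝ) / r)
      simp only at h
      rw [h] at ha hb
      rw [abs_sub_lt_iff]
      constructor <;> linarith
    rw [div_sub_div_same, abs_div, abs_of_pos hr, div_lt_one hr] at h1
    linarith
  have hsub : (fun s : ↥S => ⌊(s : ℝ) / r⌋) '' {s : ↥S | |(s : ℝ)| < M}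
      ⊆ Set.Icc ⌊(-M) / r⌋ ⌊M / r⌋ := by
    rintro _ ⟨s, hs, rfl⟩
    simp only [Set.mem_setOf_eq, abs_lt] at hs
    constructor
    · exact Int.floor_le_floor (by gcongr; exact hs.1.le)
    · exact Int.floor_le_floor (by gcongr; exact hs.2.le)
  exact Set.Finite.of_finite_image ((Set.finite_Icc _ _).subset hsub) (hinj.injOn)


/-- if the state space is a countable uniformly discrete subset `S ⊆ ℝ`,
`F` is measurable, and the Cesàro tightness condition
`lim_{M→∞} limsup_{T→∞} (1/T) ∑_{k<T} μ{x : |S_k(x,s₀)| ≥ M} = 0` holds, then the pair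
process is stochastically stable: there is a probability measure on `𝒳^ℤ × S` with
first marginal `μ` that is invariant under the skew product `Φ`. -/
theorem stochastically_stable_of_countable_uniformly_discrete_state
    {𝒳 : Type*} [TopologicalSpace 𝒳] [PolishSpace 𝒳] [MeasurableSpace 𝒳] [BorelSpace 𝒳]
    (μ : Measure (ℤ → 𝒳)) [IsProbabilityMeasure μ]
    (hμ : μ.map (fun x n => x (n + 1)) = μ)
    (S : Set ℝ) (hScount : S.Countable)
    (hSdisc : ∃ r : ℝ, 0 < r ∧ ∀ s ∈ S, ∀ s' ∈ S, s ≠ s' → r ≤ |s - s'|)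
    (F : 𝒳 × S → S) (hF : Measurable F)
    (s₀ : S)
    (htight : Tendsto (fun M : ℕ =>
        limsup (fun T : ℕ => (1 / T : ℝ) * ∑ k ∈ Finset.range T,
          (μ {x | (M : ℝ) ≤ |(((skewProd F)^[k] (x, s₀)).2 : ℝ)|}).toReal) atTop)
      atTop (nhds 0)) :
    ∃ v : Measure ((ℤ → 𝒳) × S), IsProbabilityMeasure v ∧
      v.map Prod.fst = μ ∧ v.map (skewProd F) = v := by
  classical
  haveI : Countable ↥S := hScount.to_subtype
  obtain ⟨r, hr, hsep⟩ := hSdisc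
  have hΦ : Measurable (skewProd F) := by
    apply Measurable.prod
    · exact measurable_pi_lambda _ fun n => (measurable_pi_apply (n + 1)).comp measurable_fst
    · exact hF.comp (((measurable_pi_apply 0).comp measurable_fst).prodMk measurable_snd)
  have hiter : ∀ k : ℕ, Measurable ((skewProd F)^[k]) := fun k => hΦ.iterate k
  set m : Measure ((ℤ → 𝒳) × ↥S) := μ.map (fun x => (x, s₀)) with hmdef
  haveI : IsProbabilityMeasure m :=
    Measure.isProbabilityMeasure_map (measurable_prodMk_right : Measurable fun x : ℤ → 𝒳 => (x, s₀)).aemeasurable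
  -- the marginal property
  have hm : ∀ (k : ℕ) (A : Set (ℤ → 𝒳)), MeasurableSet A →
      m ((skewProd F)^[k] ⁻¹' (A ×ˢ Set.univ)) = μ A := by
    intro k A hA
    rw [hmdef, Measure.map_apply measurable_prodMk_right
      (hiter k (hA.prod MeasurableSet.univ))]
    have hset : (fun x : ℤ → 𝒳 => (x, s₀)) ⁻¹' ((skewProd F)^[k] ⁻¹' (A ×ˢ Set.univ))
        = (fun (x : ℤ → 𝒳) (n : ℤ) => x (n + (k : ℤ))) ⁻¹' A := by
      ext x
      simp only [Set.mem_preimage, Set.mem_prod, Set.mem_univ, and_true]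
      rw [skewProd_iterate_fst]
    rw [hset, ← Measure.map_apply (measurable_shiftk (k : ℤ)) hA, map_shiftk μ hμ k]
  -- the bad sets
  set bad : ℕ → Set ↥S := fun M => {s : ↥S | (M : ℝ) ≤ |(s : ℝ)|} with hbaddef
  have hbadm : ∀ M, MeasurableSet (bad M) := by
    intro M
    have : bad M = Subtype.val ⁻¹' {y : ℝ | (M : ℝ) ≤ |y|} := rfl
    rw [this]
    exact measurable_subtype_coe (measurableSet_le measurable_const measurable_id.abs)
  have hbadfin : ∀ M, (bad M)ᶜ.Finite := by
    intro M
    have : (bad M)ᶜ = {s : ↥S | |(s : ℝ)| < M} := by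
      ext s; simp [hbaddef, not_le]
    rw [this]
    exact finite_ball S r hr hsep M
  -- identify the tail masses with the sets in the tightness hypothesis
  have hbadset : ∀ (M k : ℕ), m ((skewProd F)^[k] ⁻¹' (Set.univ ×ˢ bad M))
      = μ {x | (M : ℝ) ≤ |(((skewProd F)^[k] (x, s₀)).2 : ℝ)|} := by
    intro M k
    rw [hmdef, Measure.map_apply measurable_prodMk_right
      (hiter k (MeasurableSet.univ.prod (hbadm M)))]
    congr 1
    ext x
    simp [hbaddef]
  -- uniform bound on the Cesàro tail masses
  have hq1 : ∀ M T, aT (skewProd F) m (Set.univ ×ˢ bad M) T ≤ 1 := by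
    intro M T
    rcases Nat.eq_zero_or_pos T with rfl | hT
    · rw [aT_zero]; exact zero_le_one
    calc aT (skewProd F) m (Set.univ ×ˢ bad M) T
        ≤ (T : ℝ≥0∞)⁻¹ * ∑ k ∈ Finset.range T, 1 :=
          mul_le_mul_right (Finset.sum_le_sum fun k _ => prob_le_one) _
      _ = 1 := by
          rw [Finset.sum_const, Finset.card_range, nsmul_eq_mul, mul_one,
            ENNReal.inv_mul_cancel (by exact_mod_cast hT.ne') (by simp)]
  -- relation between the real sequence and the `ℝ≥0∞` sequence
  have htoReal : ∀ M T, (aT (skewProd F) m (Set.univ ×ˢ bad M) T).toReal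
      = (1 / T : ℝ) * ∑ k ∈ Finset.range T,
          (μ {x | (M : ℝ) ≤ |(((skewProd F)^[k] (x, s₀)).2 : ℝ)|}).toReal := by
    intro M T
    rw [aT, ENNReal.toReal_mul, ENNReal.toReal_inv, ENNReal.toReal_natCast, one_div,
      ENNReal.toReal_sum (fun k _ => measure_ne_top m _)]
    congr 1
    exact Finset.sum_congr rfl fun k _ => by rw [hbadset M k]
  have hbadsmall : ∀ ε : ℝ≥0∞, 0 < ε → ∃ M,
      Ulim (fun T => aT (skewProd F) m (Set.univ ×ˢ bad M) T) ≤ ε := by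
    intro ε hε
    set LS : ℕ → ℝ := fun M => limsup (fun T : ℕ => (1 / T : ℝ) * ∑ k ∈ Finset.range T,
      (μ {x | (M : ℝ) ≤ |(((skewProd F)^[k] (x, s₀)).2 : ℝ)|}).toReal) atTop with hLSdef
    have hofreal : Tendsto (fun M => ENNReal.ofReal (LS M)) atTop (nhds 0) := by
      have := (ENNReal.continuous_ofReal.tendsto 0).comp htight
      simpa [Function.comp_def] using this
    obtain ⟨M, hM⟩ := (hofreal.eventually_lt_const hε).exists
    refine ⟨M, ?_⟩
    set ℓ := Ulim (fun T => aT (skewProd F) m (Set.univ ×ˢ bad M) T) with hldef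
    have hle1 : ℓ ≤ 1 := by
      rw [hldef, ← Ulim_const 1]
      exact Ulim_mono (Eventually.of_forall (hq1 M))
    have hne : ℓ ≠ ∞ := (hle1.trans_lt ENNReal.one_lt_top).ne
    have htendR : Tendsto (fun T : ℕ => (1 / T : ℝ) * ∑ k ∈ Finset.range T,
        (μ {x | (M : ℝ) ≤ |(((skewProd F)^[k] (x, s₀)).2 : ℝ)|}).toReal)
        (UF : Filter ℕ) (nhds ℓ.toReal) := by
      have := (ENNReal.tendsto_toReal hne).comp (tendsto_Ulim
        (fun T => aT (skewProd F) m (Set.univ ×ˢ bad M) T))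
      exact this.congr fun T => htoReal M T
    have hls : ℓ.toReal ≤ LS M := by
      rw [← htendR.limsup_eq]
      refine limsup_le_limsup_of_le UF_le ?_ ?_
      · refine isCoboundedUnder_le_of_le (UF : Filter ℕ) (x := 0) fun T => ?_
        positivity
      · refine isBoundedUnder_of ⟨1, fun T => ?_⟩
        rw [← htoReal M T]
        calc (aT (skewProd F) m (Set.univ ×ˢ bad M) T).toReal
            ≤ (1 : ℝ≥0∞).toReal := ENNReal.toReal_mono (by simp) (hq1 M T)
          _ = 1 := by simp
    calc ℓ = ENNReal.ofReal ℓ.toReal := (ENNReal.ofReal_toReal hne).symm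
      _ ≤ ENNReal.ofReal (LS M) := ENNReal.ofReal_le_ofReal hls
      _ ≤ ε := hM.le
  exact aux_invariant μ hΦ hm bad hbadm hbadfin hbadsmall
end

section
/- Let μ be a θ-invariant, θ-ergodic Borel probability measure on ℝ^ℤ. Fix m > 0, let Q : ℝ → {−m, m} be given by Q(z) = m if z ≥ 0 and Q(z) = −m if z < 0, let 𝒮 = mℤ = {km : k ∈ ℤ} ⊆ ℝ, and let F : ℝ × 𝒮 → 𝒮 be F(x, s) = s + Q(x − s) (Δ-modulation). Suppose μ{x : x₀ ≥ m} < 1/2 and μ{x : x₀ ≤ −m} < 1/2. Then the pair process is stochastically stable: there exists a Borel probability measure v on ℝ^ℤ × mℤ whose first marginal equals μ and which is Φ-invariant. -/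
open MeasureTheory ProbabilityTheory Filter
open scoped ENNReal NNReal

/-- The state space `mℤ = {km : k ∈ ℤ} ⊆ ℝ` of `Δ`-modulation. -/
abbrev mZ (m : ℝ) : Type := {s : ℝ // ∃ k : ℤ, s = (k : ℝ) * m}

/-- The two-level quantizer `Q(z) = m` if `z ≥ 0`, `Q(z) = −m` if `z < 0`. -/
noncomputable def deltaQ (m z : ℝ) : ℝ := if 0 ≤ z then m else -m

/-- The `Δ`-modulation update `F(x, s) = s + Q(x − s)`, mapping `mℤ` to itself. -/
noncomputable def deltaF (m : ℝ) (p : ℝ × mZ m) : mZ m :=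
  ⟨(p.2 : ℝ) + deltaQ m (p.1 - (p.2 : ℝ)), by
    obtain ⟨k, hk⟩ := p.2.2
    unfold deltaQ
    split_ifs
    · exact ⟨k + 1, by push_cast [hk]; ring⟩
    · exact ⟨k - 1, by push_cast [hk]; ring⟩⟩

namespace DeltaMod

abbrev Om : Type := ℤ → ℝ

def th (x : Om) : Om := fun n => x (n + 1)
def ps (x : Om) : Om := fun n => x (n - 1)

lemma measurable_th : Measurable th :=
  measurable_pi_lambda _ (fun n => measurable_pi_apply (n + 1))

lemma measurable_ps : Measurable ps :=
  measurable_pi_lambda _ (fun n => measurable_pi_apply (n - 1))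

@[simp] lemma ps_th (x : Om) : ps (th x) = x := by funext n; simp [ps, th]

@[simp] lemma th_ps (x : Om) : th (ps x) = x := by funext n; simp [ps, th]

lemma ps_iter_apply (k : ℕ) (x : Om) (j : ℤ) : (ps^[k] x) j = x (j - k) := by
  induction k generalizing x j with
  | zero => simp
  | succ n ih =>
    rw [Function.iterate_succ_apply, ih (ps x) j]
    simp only [ps]
    congr 1
    push_cast
    ring

section Maximal

variable {μ : Measure Om} [IsProbabilityMeasure μ]

variable (T : Om → Om) (g : Om → ℝ)

/-- Birkhoff sums -/
def bS (n : ℕ) (x : Om) : ℝ := ∑ j ∈ Finset.range n, g (T^[j] x)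

lemma bS_succ' (n : ℕ) (x : Om) : bS T g (n + 1) x = g x + bS T g n (T x) := by
  unfold bS
  rw [Finset.sum_range_succ']
  simp only [Function.iterate_succ_apply, Function.iterate_zero_apply]
  rw [add_comm]

/-- running maximum of Birkhoff sums over `n ≤ N`, `= max(0, max_{1≤n≤N} S_n)`. -/
def bM : ℕ → Om → ℝ
  | 0, _ => 0
  | (N+1), x => max (bM N x) (bS T g (N+1) x)

lemma bM_nonneg (N : ℕ) (x : Om) : 0 ≤ bM T g N x := by
  induction N with
  | zero => simp [bM]
  | succ n ih => simp only [bM]; exact le_max_of_le_left ih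

lemma bS_le_bM (n N : ℕ) (h1 : 1 ≤ n) (h2 : n ≤ N) (x : Om) : bS T g n x ≤ bM T g N x := by
  induction N with
  | zero => omega
  | succ N ih =>
    rcases Nat.lt_or_ge n (N+1) with h | h
    · exact le_max_of_le_left (ih (by omega))
    · have : n = N + 1 := by omega
      subst this
      exact le_max_right _ _

lemma bM_attained (N : ℕ) (x : Om) (h : 0 < bM T g N x) :
    ∃ n, 1 ≤ n ∧ n ≤ N ∧ bM T g N x = bS T g n x := by
  induction N with
  | zero => simp [bM] at h
  | succ N ih =>
    simp only [bM] at h ⊢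
    rcases le_or_gt (bS T g (N+1) x) (bM T g N x) with hc | hc
    · rw [max_eq_left hc] at h ⊢
      obtain ⟨n, h1, h2, h3⟩ := ih h
      exact ⟨n, h1, by omega, h3⟩
    · exact ⟨N+1, by omega, le_refl _, max_eq_right hc.le⟩

lemma bM_mono (N : ℕ) (x : Om) : bM T g N x ≤ bM T g (N+1) x := le_max_left _ _

variable {T g}

lemma measurable_bS (hT : Measurable T) (hgm : Measurable g) (n : ℕ) : Measurable (bS T g n) :=
  Finset.measurable_sum _ (fun j _ => hgm.comp (hT.iterate j))

lemma integrable_bS (hT : MeasurePreserving T μ μ) (hg : Integrable g μ) (n : ℕ) :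
    Integrable (bS T g n) μ := by
  apply integrable_finset_sum
  intro j _
  exact ((hT.iterate j).integrable_comp hg.aestronglyMeasurable).mpr hg

lemma measurable_bM (hT : Measurable T) (hgm : Measurable g) (N : ℕ) : Measurable (bM T g N) := by
  induction N with
  | zero => exact measurable_const
  | succ N ih => exact ih.max (measurable_bS hT hgm (N+1))

lemma integrable_bM (hT : MeasurePreserving T μ μ) (hg : Integrable g μ) (N : ℕ) :
    Integrable (bM T g N) μ := by
  induction N with
  | zero => exact integrable_const 0
  | succ N ih =>
    have h := ih.sup (integrable_bS hT hg (N+1))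
    exact h.congr (Filter.Eventually.of_forall (fun x => by
      simp only [Pi.sup_apply, bM]))

lemma bM_key (N : ℕ) (x : Om) (h : 0 < bM T g N x) : bM T g N x ≤ g x + bM T g N (T x) := by
  obtain ⟨n, h1, h2, h3⟩ := bM_attained T g N x h
  rw [h3]
  obtain ⟨k, rfl⟩ : ∃ k, n = k + 1 := ⟨n - 1, by omega⟩
  rw [bS_succ']
  rcases Nat.eq_zero_or_pos k with rfl | hk
  · simp only [bS, Finset.range_zero, Finset.sum_empty]
    linarith [bM_nonneg T g N (T x)]
  · linarith [bS_le_bM T g k N hk (by omega) (T x)]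

/-- Garsia's maximal ergodic theorem. -/
theorem maximal_ergodic (hT : MeasurePreserving T μ μ)
    (hgm : Measurable g) (hg : Integrable g μ) :
    0 ≤ ∫ x in {x | ∃ n, 1 ≤ n ∧ 0 < bS T g n x}, g x ∂μ := by
  have hTm := hT.measurable
  set E : ℕ → Set Om := fun N => {x | 0 < bM T g N x} with hE
  have hEm : ∀ N, MeasurableSet (E N) :=
    fun N => measurableSet_lt measurable_const (measurable_bM hTm hgm N)
  have hble : ∀ a b, a ≤ b → ∀ x, bM T g a x ≤ bM T g b x := by
    intro a b hab x
    induction b with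
    | zero => have : a = 0 := by omega
              subst this; exact le_refl _
    | succ b ih =>
      rcases Nat.lt_or_ge a (b+1) with h | h
      · exact (ih (by omega)).trans (bM_mono T g b x)
      · have : a = b + 1 := by omega
        subst this; exact le_refl _
  have hEmono : Monotone E := by
    intro a b hab x hx
    exact lt_of_lt_of_le hx (hble a b hab x)
  have hstep : ∀ N, 0 ≤ ∫ x in E N, g x ∂μ := by
    intro N
    have hMint := integrable_bM (μ := μ) hT hg N
    have hMTint' : Integrable (bM T g N ∘ T) μ :=
      (hT.integrable_comp (g := bM T g N) hMint.aestronglyMeasurable).mpr hMint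
    have hMTint : Integrable (fun x => bM T g N (T x)) μ := hMTint'
    have h1 : ∫ x in E N, (bM T g N x - bM T g N (T x)) ∂μ ≤ ∫ x in E N, g x ∂μ := by
      apply setIntegral_mono_on ((hMint.sub hMTint).integrableOn) hg.integrableOn (hEm N)
      intro x hx
      have hb := bM_key (T := T) (g := g) N x hx
      simp only [Pi.sub_apply]
      linarith
    have h2 : 0 ≤ ∫ x in E N, (bM T g N x - bM T g N (T x)) ∂μ := by
      rw [integral_sub hMint.integrableOn hMTint.integrableOn]
      have hA : ∫ x in E N, bM T g N x ∂μ = ∫ x, bM T g N x ∂μ := by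
        rw [← integral_add_compl (hEm N) hMint]
        have h0 : ∫ x in (E N)ᶜ, bM T g N x ∂μ = 0 := by
          apply setIntegral_eq_zero_of_forall_eq_zero
          intro x hx
          simp only [hE, Set.mem_compl_iff, Set.mem_setOf_eq, not_lt] at hx
          exact le_antisymm hx (bM_nonneg T g N x)
        rw [h0]; ring
      have hB : ∫ x in E N, bM T g N (T x) ∂μ ≤ ∫ x, bM T g N (T x) ∂μ :=
        setIntegral_le_integral hMTint
          (Filter.Eventually.of_forall (fun x => bM_nonneg T g N (T x)))
      have hC : ∫ x, bM T g N (T x) ∂μ = ∫ x, bM T g N x ∂μ := by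
        have h := integral_map (φ := T) (μ := μ) hTm.aemeasurable
          (f := bM T g N) (by rw [hT.map_eq]; exact hMint.aestronglyMeasurable)
        rw [hT.map_eq] at h
        exact h.symm
      rw [hA]
      linarith
    linarith
  have hunion : ⋃ N, E N = {x | ∃ n, 1 ≤ n ∧ 0 < bS T g n x} := by
    ext x
    simp only [Set.mem_iUnion, hE, Set.mem_setOf_eq]
    constructor
    · rintro ⟨N, hx⟩
      obtain ⟨n, hn1, _, h3⟩ := bM_attained T g N x hx
      exact ⟨n, hn1, h3 ▸ hx⟩
    · rintro ⟨n, h1, h2⟩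
      exact ⟨n, lt_of_lt_of_le h2 (bS_le_bM T g n n h1 le_rfl x)⟩
  have hIO : IntegrableOn g (⋃ N, E N) μ := hg.integrableOn
  have htend := tendsto_setIntegral_of_monotone hEm hEmono hIO
  rw [hunion] at htend
  exact ge_of_tendsto' htend hstep

end Maximal

section Freq

open Finset

variable {μ : Measure Om} [IsProbabilityMeasure μ]

/-- integer count of visits to `A` along the orbit -/
noncomputable def SA (T : Om → Om) (A : Set Om) (ℓ : ℕ) (y : Om) : ℤ :=
  ∑ j ∈ Finset.range ℓ, A.indicator (fun _ => (1:ℤ)) (T^[j] y)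

lemma SA_succ' (T : Om → Om) (A : Set Om) (ℓ : ℕ) (y : Om) :
    SA T A (ℓ + 1) y = A.indicator (fun _ => (1:ℤ)) y + SA T A ℓ (T y) := by
  unfold SA
  rw [Finset.sum_range_succ']
  simp only [Function.iterate_succ_apply, Function.iterate_zero_apply]
  rw [add_comm]

lemma SA_nonneg (T : Om → Om) (A : Set Om) (ℓ : ℕ) (y : Om) : 0 ≤ SA T A ℓ y := by
  apply Finset.sum_nonneg
  intro j _
  by_cases hmem : T^[j] y ∈ A <;> simp [hmem]

lemma SA_le (T : Om → Om) (A : Set Om) (ℓ : ℕ) (y : Om) : SA T A ℓ y ≤ ℓ := by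
  calc SA T A ℓ y ≤ ∑ _j ∈ Finset.range ℓ, (1:ℤ) := by
        apply Finset.sum_le_sum
        intro j _
        by_cases hmem : T^[j] y ∈ A <;> simp [hmem]
    _ = ℓ := by simp

lemma measurable_SA {T : Om → Om} (hT : Measurable T) {A : Set Om} (hA : MeasurableSet A)
    (ℓ : ℕ) : Measurable (SA T A ℓ) := by
  apply Finset.measurable_sum
  intro j _
  exact Measurable.indicator measurable_const ((hT.iterate j) hA)

/-- the set where the orbit visits `A` with upper frequency `≥ 1/2` -/
def Bprime (T : Om → Om) (A : Set Om) : Set Om :=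
  ⋂ (k : ℕ), ⋂ (L : ℕ), ⋃ (ℓ : ℕ),
    {y | L < ℓ ∧ (k : ℤ) * ℓ < (2 * k + 4) * SA T A ℓ y}

lemma measurableSet_Bprime {T : Om → Om} (hT : Measurable T) {A : Set Om}
    (hA : MeasurableSet A) : MeasurableSet (Bprime T A) := by
  apply MeasurableSet.iInter
  intro k
  apply MeasurableSet.iInter
  intro L
  apply MeasurableSet.iUnion
  intro ℓ
  have : {y | L < ℓ ∧ (k : ℤ) * ℓ < (2 * k + 4) * SA T A ℓ y}
      = {y | L < ℓ} ∩ {y | (k : ℤ) * ℓ < (2 * k + 4) * SA T A ℓ y} := rfl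
  rw [this]
  exact (MeasurableSet.const _).inter
    (measurableSet_lt measurable_const ((measurable_SA hT hA ℓ).const_mul _))

/-- arithmetic core of invariance of `Bprime` -/
lemma P_transfer (u u' : ℕ → ℤ)
    (hb1 : ∀ ℓ, u (ℓ + 1) - 1 ≤ u' ℓ) (hb2 : ∀ ℓ, u' ℓ ≤ u (ℓ + 1))
    (h : ∀ k L : ℕ, ∃ ℓ : ℕ, L < ℓ ∧ (k : ℤ) * ℓ < (2 * k + 4) * u ℓ) :
    ∀ k L : ℕ, ∃ ℓ : ℕ, L < ℓ ∧ (k : ℤ) * ℓ < (2 * k + 4) * u' ℓ := by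
  intro k L
  obtain ⟨ℓ₁, hℓ₁, h1⟩ := h (k + 1) (max (L + 1) (k * k + 4 * k + 7))
  have hl1 : L + 1 < ℓ₁ := lt_of_le_of_lt (le_max_left _ _) hℓ₁
  have hl2 : k * k + 4 * k + 7 < ℓ₁ := lt_of_le_of_lt (le_max_right _ _) hℓ₁
  refine ⟨ℓ₁ - 1, by omega, ?_⟩
  have hrw : ℓ₁ - 1 + 1 = ℓ₁ := by omega
  have hb1' := hb1 (ℓ₁ - 1)
  have hb2' := hb2 (ℓ₁ - 1)
  rw [hrw] at hb1' hb2'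
  set K : ℤ := (k : ℤ) with hK
  have hK0 : 0 ≤ K := Int.natCast_nonneg k
  have hcast : ((ℓ₁ - 1 : ℕ) : ℤ) = (ℓ₁ : ℤ) - 1 := by
    push_cast [Nat.cast_sub (by omega : 1 ≤ ℓ₁)]; ring
  rw [hcast]
  have hlb : (K * K + 4 * K + 8 : ℤ) ≤ (ℓ₁ : ℤ) := by
    have : (k * k + 4 * k + 8 : ℕ) ≤ ℓ₁ := by omega
    calc (K * K + 4 * K + 8 : ℤ) = ((k * k + 4 * k + 8 : ℕ) : ℤ) := by push_cast; ring
      _ ≤ (ℓ₁ : ℤ) := by exact_mod_cast this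
  have h1' : (K + 1) * (ℓ₁ : ℤ) < (2 * K + 6) * u ℓ₁ := by
    have : ((k : ℤ) + 1) * ℓ₁ < (2 * (k + 1) + 4) * u ℓ₁ := by
      calc ((k:ℤ) + 1) * ℓ₁ = ((k + 1 : ℕ) : ℤ) * ℓ₁ := by push_cast; ring
        _ < (2 * (k + 1 : ℕ) + 4) * u ℓ₁ := h1
        _ = (2 * ((k:ℤ) + 1) + 4) * u ℓ₁ := by push_cast; ring
    calc (K + 1) * (ℓ₁ : ℤ) = ((k:ℤ) + 1) * ℓ₁ := by rw [hK]
      _ < (2 * ((k:ℤ) + 1) + 4) * u ℓ₁ := by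
          calc ((k:ℤ) + 1) * ℓ₁ < (2 * (k + 1) + 4) * u ℓ₁ := this
            _ = (2 * ((k:ℤ) + 1) + 4) * u ℓ₁ := by push_cast; ring
      _ = (2 * K + 6) * u ℓ₁ := by rw [hK]; ring
  -- goal : K * ((ℓ₁:ℤ) - 1) < (2 * K + 4) * u' (ℓ₁ - 1)
  have hu : (2 * K + 6) * ((2 * K + 4) * u' (ℓ₁ - 1) - K * ((ℓ₁ : ℤ) - 1)) > 0 := by
    nlinarith [h1', hlb, hb1', hK0]
  have hpos : (0:ℤ) < 2 * K + 6 := by linarith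
  nlinarith [hu, hpos]

lemma P_transfer' (u u' : ℕ → ℤ)
    (hb1 : ∀ ℓ, u (ℓ + 1) - 1 ≤ u' ℓ) (hb2 : ∀ ℓ, u' ℓ ≤ u (ℓ + 1))
    (h : ∀ k L : ℕ, ∃ ℓ : ℕ, L < ℓ ∧ (k : ℤ) * ℓ < (2 * k + 4) * u' ℓ) :
    ∀ k L : ℕ, ∃ ℓ : ℕ, L < ℓ ∧ (k : ℤ) * ℓ < (2 * k + 4) * u ℓ := by
  intro k L
  obtain ⟨ℓ₁, hℓ₁, h1⟩ := h (k + 1) (max L (k * k + 4 * k + 7))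
  have hl1 : L < ℓ₁ := lt_of_le_of_lt (le_max_left _ _) hℓ₁
  have hl2 : k * k + 4 * k + 7 < ℓ₁ := lt_of_le_of_lt (le_max_right _ _) hℓ₁
  refine ⟨ℓ₁ + 1, by omega, ?_⟩
  set K : ℤ := (k : ℤ) with hK
  have hK0 : 0 ≤ K := Int.natCast_nonneg k
  have hlb : (K * K + 4 * K + 8 : ℤ) ≤ (ℓ₁ : ℤ) := by
    have : (k * k + 4 * k + 8 : ℕ) ≤ ℓ₁ := by omega
    calc (K * K + 4 * K + 8 : ℤ) = ((k * k + 4 * k + 8 : ℕ) : ℤ) := by push_cast; ring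
      _ ≤ (ℓ₁ : ℤ) := by exact_mod_cast this
  have h1' : (K + 1) * (ℓ₁ : ℤ) < (2 * K + 6) * u' ℓ₁ := by
    calc (K + 1) * (ℓ₁ : ℤ) = ((k + 1 : ℕ) : ℤ) * ℓ₁ := by push_cast; ring
      _ < (2 * (k + 1 : ℕ) + 4) * u' ℓ₁ := h1
      _ = (2 * K + 6) * u' ℓ₁ := by push_cast; ring
  have hb2' := hb2 ℓ₁
  have hcast : ((ℓ₁ + 1 : ℕ) : ℤ) = (ℓ₁ : ℤ) + 1 := by push_cast; ring
  rw [hcast]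
  have hu : (2 * K + 6) * ((2 * K + 4) * u (ℓ₁ + 1) - K * ((ℓ₁ : ℤ) + 1)) > 0 := by
    nlinarith [h1', hlb, hb2', hK0]
  have hpos : (0:ℤ) < 2 * K + 6 := by linarith
  nlinarith [hu, hpos]

lemma mem_Bprime_iff (T : Om → Om) (A : Set Om) (y : Om) :
    y ∈ Bprime T A ↔ ∀ k L : ℕ, ∃ ℓ : ℕ, L < ℓ ∧ (k : ℤ) * ℓ < (2 * k + 4) * SA T A ℓ y := by
  simp only [Bprime, Set.mem_iInter, Set.mem_iUnion, Set.mem_setOf_eq]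

lemma Bprime_invariant (T : Om → Om) (A : Set Om) : T ⁻¹' (Bprime T A) = Bprime T A := by
  ext y
  simp only [Set.mem_preimage, mem_Bprime_iff]
  have hb1 : ∀ ℓ, SA T A (ℓ + 1) y - 1 ≤ SA T A ℓ (T y) := by
    intro ℓ
    rw [SA_succ']
    by_cases hmem : y ∈ A <;> simp [hmem]
  have hb2 : ∀ ℓ, SA T A ℓ (T y) ≤ SA T A (ℓ + 1) y := by
    intro ℓ
    rw [SA_succ']
    have := SA_nonneg T A ℓ (T y)
    by_cases hmem : y ∈ A <;> simp [hmem] <;> omega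
  constructor
  · intro h
    exact P_transfer' _ _ hb1 hb2 h
  · intro h
    exact P_transfer _ _ hb1 hb2 h

/-- key: the set of upper-frequency `≥ 1/2` is null when `μ A < 1/2`. -/
theorem Bprime_null {T : Om → Om} (hT : MeasurePreserving T μ μ)
    (herg : ∀ B : Set Om, MeasurableSet B → T ⁻¹' B = B → μ B = 0 ∨ μ B = 1)
    {A : Set Om} (hA : MeasurableSet A) (hAlt : μ A < 1 / 2) :
    μ (Bprime T A) = 0 := by
  rcases herg _ (measurableSet_Bprime hT.measurable hA) (Bprime_invariant T A) with h0 | h1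
  · exact h0
  exfalso
  have hAne : μ A ≠ ∞ := (measure_lt_top μ A).ne
  have ha : (μ A).toReal < 1 / 2 := by
    have h2 : ((1:ℝ≥0∞) / 2).toReal = 1 / 2 := by simp
    rw [← h2]
    exact ENNReal.toReal_strict_mono (by simp) hAlt
  set a : ℝ := (μ A).toReal with haa
  have ha0 : 0 ≤ a := ENNReal.toReal_nonneg
  -- pick k with (2k+4) a < k
  obtain ⟨k, hk⟩ := exists_nat_gt ((4 * a) / (1 - 2 * a))
  have h2a : (0:ℝ) < 1 - 2 * a := by linarith
  have hka : (2 * (k:ℝ) + 4) * a < k := by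
    have := (div_lt_iff₀ h2a).mp hk
    nlinarith
  set c : ℝ := (k : ℝ) / (2 * k + 4) with hc
  have hden : (0:ℝ) < 2 * (k:ℝ) + 4 := by positivity
  have hac : a < c := by
    rw [hc, lt_div_iff₀ hden]
    linarith
  set g : Om → ℝ := fun y => A.indicator (fun _ => (1:ℝ)) y - c with hg
  have hgm : Measurable g := (Measurable.indicator measurable_const hA).sub measurable_const
  have hgi : Integrable g μ :=
    Integrable.sub ((integrable_const (1:ℝ)).indicator hA) (integrable_const c)
  -- Bprime ⊆ E
  have hsub : Bprime T A ⊆ {y | ∃ n, 1 ≤ n ∧ 0 < bS T g n y} := by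
    intro y hy
    obtain ⟨ℓ, hℓ1, hℓ2⟩ := (mem_Bprime_iff T A y).mp hy k 0
    refine ⟨ℓ, hℓ1, ?_⟩
    have hbs : bS T g ℓ y = (SA T A ℓ y : ℝ) - c * ℓ := by
      unfold bS SA
      rw [Finset.sum_sub_distrib]
      push_cast
      congr 1
      · apply Finset.sum_congr rfl
        intro j _
        by_cases hmem : T^[j] y ∈ A <;> simp [hmem]
      · rw [Finset.sum_const, Finset.card_range]
        ring
    rw [hbs]
    have : (k:ℝ) * ℓ < (2 * k + 4) * (SA T A ℓ y : ℝ) := by exact_mod_cast hℓ2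
    rw [hc]
    rw [sub_pos, div_mul_eq_mul_div, div_lt_iff₀ hden]
    nlinarith
  have hEm : MeasurableSet {y | ∃ n, 1 ≤ n ∧ 0 < bS T g n y} := by
    have : {y | ∃ n, 1 ≤ n ∧ 0 < bS T g n y} = ⋃ n, ⋃ (_ : 1 ≤ n), {y | 0 < bS T g n y} := by
      ext y; simp
    rw [this]
    exact MeasurableSet.iUnion (fun n => MeasurableSet.iUnion (fun _ =>
      measurableSet_lt measurable_const (measurable_bS hT.measurable hgm n)))
  have hE1 : μ {y | ∃ n, 1 ≤ n ∧ 0 < bS T g n y} = 1 := by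
    refine le_antisymm prob_le_one ?_
    calc (1:ℝ≥0∞) = μ (Bprime T A) := h1.symm
      _ ≤ _ := measure_mono hsub
  have hmax := maximal_ergodic (μ := μ) hT hgm hgi
  have hcompl : μ {y | ∃ n, 1 ≤ n ∧ 0 < bS T g n y}ᶜ = 0 := by
    rw [measure_compl hEm (measure_ne_top μ _), hE1, measure_univ, tsub_self]
  have hfull : ∫ y in {y | ∃ n, 1 ≤ n ∧ 0 < bS T g n y}, g y ∂μ = ∫ y, g y ∂μ := by
    rw [← integral_add_compl hEm hgi]
    have : ∫ y in {y | ∃ n, 1 ≤ n ∧ 0 < bS T g n y}ᶜ, g y ∂μ = 0 := by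
      rw [Measure.restrict_eq_zero.mpr hcompl]
      exact integral_zero_measure _
    rw [this, add_zero]
  have hint : ∫ y, g y ∂μ = a - c := by
    rw [hg]
    rw [integral_sub ((integrable_const (1:ℝ)).indicator hA) (integrable_const c)]
    rw [integral_const]
    simp only [measure_univ, ENNReal.toReal_one, one_smul, probReal_univ]
    congr 1
    rw [integral_indicator hA]
    simp [haa, Measure.real]
  rw [hfull, hint] at hmax
  linarith

end Freq

section Walk

open Finset

/-- abstract walk lemma: a ±1 walk from 0 that exceeds `R` at time `n` must have had a
recent window with many "marked" up-steps. -/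
lemma walk_count (f : ℕ → ℤ) (B : Set ℕ)
    (hstep : ∀ t, f (t + 1) = f t + 1 ∨ f (t + 1) = f t - 1)
    (hup : ∀ t, f (t + 1) = f t + 1 → 2 ≤ f t → t ∈ B)
    (h0 : f 0 = 0) (n R : ℕ) (hR : 1 ≤ R) (h : (R : ℤ) < f n) :
    ∃ ℓ, 1 ≤ ℓ ∧ ℓ ≤ n ∧
      (ℓ : ℤ) + R ≤ 2 * ∑ i ∈ Finset.range ℓ, Set.indicator B (fun _ => (1:ℤ)) (n - 1 - i) + 2 := by
  classical
  -- last time ≤ n with f ≤ 1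
  set P : ℕ → Prop := fun t => f t ≤ 1 with hP
  have hP0 : P 0 := by simp [hP, h0]
  set τ := Nat.findGreatest P n with hτdef
  have hPτ : P τ := Nat.findGreatest_spec (Nat.zero_le n) hP0
  have hτle : τ ≤ n := Nat.findGreatest_le n
  have hgt : ∀ t, τ < t → t ≤ n → 2 ≤ f t := by
    intro t h1 h2
    have := Nat.findGreatest_is_greatest (P := P) h1 h2
    simp only [hP, not_le] at this
    omega
  have hτn : τ < n := by
    rcases Nat.lt_or_ge τ n with h' | h'
    · exact h'
    · exfalso
      have : τ = n := by omega
      rw [this] at hPτ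
      simp only [hP] at hPτ
      omega
  set ℓ := n - τ with hℓ
  refine ⟨ℓ, by omega, by omega, ?_⟩
  -- telescoping over the window
  set d : ℕ → ℤ := fun i => f (τ + i + 1) - f (τ + i) with hd
  have htel : ∑ i ∈ range ℓ, d i = f n - f τ := by
    have := Finset.sum_range_sub (fun i => f (τ + i)) ℓ
    calc ∑ i ∈ range ℓ, d i = ∑ i ∈ range ℓ, ((fun i => f (τ + i)) (i+1) - (fun i => f (τ + i)) i) := by
          apply Finset.sum_congr rfl
          intro i _
          simp only [hd]
          have hh : τ + (i + 1) = τ + i + 1 := by omega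
          rw [hh]
      _ = f (τ + ℓ) - f (τ + 0) := by rw [this]
      _ = f n - f τ := by
          have h1 : τ + ℓ = n := by omega
          have h2 : τ + 0 = τ := by omega
          rw [h1, h2]
  -- split into up and down steps
  set Up : Finset ℕ := (range ℓ).filter (fun i => d i = 1) with hUp
  have hdval : ∀ i, d i = 1 ∨ d i = -1 := by
    intro i
    rcases hstep (τ + i) with h' | h' <;> simp [hd, h']
  have hsum_split : ∑ i ∈ range ℓ, d i = Up.card - ((range ℓ).card - Up.card) := by
    rw [← Finset.sum_filter_add_sum_filter_not (range ℓ) (fun i => d i = 1) d]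
    have h1 : ∑ i ∈ (range ℓ).filter (fun i => d i = 1), d i = Up.card := by
      rw [Finset.sum_congr rfl (fun i hi => (Finset.mem_filter.mp hi).2)]
      simp [hUp]
    have h2 : ∑ i ∈ (range ℓ).filter (fun i => ¬ d i = 1), d i
        = -(((range ℓ).filter (fun i => ¬ d i = 1)).card : ℤ) := by
      have hall : ∀ i ∈ (range ℓ).filter (fun i => ¬ d i = 1), d i = -1 := by
        intro i hi
        rcases hdval i with h' | h'
        · exact absurd h' (Finset.mem_filter.mp hi).2
        · exact h'
      rw [Finset.sum_congr rfl hall]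
      simp
    rw [h1, h2]
    have := Finset.card_filter_add_card_filter_not (s := range ℓ) (p := fun i => d i = 1)
    push_cast [← this]
    ring
  have hcard : ((range ℓ).card : ℤ) = ℓ := by simp
  have hUpcard : 2 * (Up.card : ℤ) = ℓ + f n - f τ := by
    rw [htel] at hsum_split
    rw [hcard] at hsum_split
    omega
  -- up-steps with i ≥ 1 are in B
  have hupB : ∀ i, i ∈ Up → 1 ≤ i → (τ + i) ∈ B := by
    intro i hi h1i
    have hdi : d i = 1 := (Finset.mem_filter.mp hi).2
    have hiℓ : i < ℓ := Finset.mem_range.mp (Finset.mem_filter.mp hi).1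
    apply hup (τ + i)
    · simp only [hd] at hdi
      omega
    · exact hgt (τ + i) (by omega) (by omega)
  -- map i ↦ ℓ - 1 - i into the window count
  have hcount : (Up.card : ℤ) - 1 ≤ ∑ i ∈ range ℓ, Set.indicator B (fun _ => (1:ℤ)) (n - 1 - i) := by
    set Up1 := Up.filter (fun i => 1 ≤ i) with hUp1
    have hc1 : Up.card ≤ Up1.card + 1 := by
      have : Up ⊆ Up1 ∪ {0} := by
        intro i hi
        rcases Nat.eq_zero_or_pos i with rfl | h'
        · simp
        · exact Finset.mem_union_left _ (Finset.mem_filter.mpr ⟨hi, h'⟩)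
      calc Up.card ≤ (Up1 ∪ {0}).card := Finset.card_le_card this
        _ ≤ Up1.card + 1 := by
            refine (Finset.card_union_le _ _).trans ?_
            simp
    have himg : ∀ i ∈ Up1, Set.indicator B (fun _ => (1:ℤ)) (n - 1 - (ℓ - 1 - i)) = 1 := by
      intro i hi
      have hi1 : 1 ≤ i := (Finset.mem_filter.mp hi).2
      have hiU : i ∈ Up := (Finset.mem_filter.mp hi).1
      have hiℓ : i < ℓ := Finset.mem_range.mp (Finset.mem_filter.mp hiU).1
      have : n - 1 - (ℓ - 1 - i) = τ + i := by omega
      rw [this]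
      simp [Set.indicator_apply, hupB i hiU hi1]
    have hinj : ∀ i ∈ Up1, ∀ j ∈ Up1, (ℓ - 1 - i) = (ℓ - 1 - j) → i = j := by
      intro i hi j hj hij
      have hiℓ : i < ℓ := Finset.mem_range.mp (Finset.mem_filter.mp (Finset.mem_filter.mp hi).1).1
      have hjℓ : j < ℓ := Finset.mem_range.mp (Finset.mem_filter.mp (Finset.mem_filter.mp hj).1).1
      omega
    -- the image of Up1 under (ℓ - 1 - ·) is inside range ℓ
    have hmaps : ∀ i ∈ Up1, ℓ - 1 - i ∈ range ℓ := by
      intro i hi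
      have hiℓ : i < ℓ := Finset.mem_range.mp (Finset.mem_filter.mp (Finset.mem_filter.mp hi).1).1
      simp only [Finset.mem_range]
      omega
    have hle : (Up1.card : ℤ) ≤ ∑ i ∈ range ℓ, Set.indicator B (fun _ => (1:ℤ)) (n - 1 - i) := by
      have himage : Up1.image (fun i => ℓ - 1 - i) ⊆ range ℓ := by
        intro j hj
        obtain ⟨i, hi, rfl⟩ := Finset.mem_image.mp hj
        exact hmaps i hi
      have hcardim : (Up1.image (fun i => ℓ - 1 - i)).card = Up1.card :=
        Finset.card_image_of_injOn hinj
      calc (Up1.card : ℤ) = ∑ j ∈ Up1.image (fun i => ℓ - 1 - i), 1 := by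
            rw [Finset.sum_const, hcardim]; ring
        _ = ∑ j ∈ Up1.image (fun i => ℓ - 1 - i), Set.indicator B (fun _ => (1:ℤ)) (n - 1 - j) := by
            apply Finset.sum_congr rfl
            intro j hj
            obtain ⟨i, hi, rfl⟩ := Finset.mem_image.mp hj
            exact (himg i hi).symm
        _ ≤ ∑ i ∈ range ℓ, Set.indicator B (fun _ => (1:ℤ)) (n - 1 - i) := by
            apply Finset.sum_le_sum_of_subset_of_nonneg himage
            intro i _ _
            by_cases hmem : (n - 1 - i) ∈ B <;> simp [hmem]
    have : (Up.card : ℤ) ≤ (Up1.card : ℤ) + 1 := by exact_mod_cast hc1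
    linarith
  have hfτ : f τ ≤ 1 := hPτ
  omega

end Walk

section Chain

variable (m : ℝ)

/-- the quantized one-step update on integer states -/
noncomputable def stepk (a : ℝ) (k : ℤ) : ℤ := if (k : ℝ) * m ≤ a then k + 1 else k - 1

/-- forward walk from 0 driven by `x 0, x 1, …` -/
noncomputable def KK : ℕ → Om → ℤ
  | 0, _ => 0
  | (n+1), x => stepk m (x n) (KK n x)

/-- state at time 0 started from 0 at time `-n` -/
noncomputable def cc (n : ℕ) (x : Om) : ℤ := KK m n (ps^[n] x)

lemma measurable_KK (n : ℕ) : Measurable (KK m n) := by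
  induction n with
  | zero => exact measurable_const
  | succ n ih =>
    have hs : MeasurableSet {x : Om | (KK m n x : ℝ) * m ≤ x (n : ℤ)} :=
      measurableSet_le ((measurable_from_top.comp ih).mul_const m) (measurable_pi_apply _)
    show Measurable (fun x => stepk m (x (n : ℤ)) (KK m n x))
    unfold stepk
    exact Measurable.ite hs (ih.add_const 1) (ih.sub_const 1)
  
lemma measurable_cc (n : ℕ) : Measurable (cc m n) :=
  (measurable_KK m n).comp (measurable_ps.iterate n)

lemma cc_succ_th (n : ℕ) (x : Om) : cc m (n+1) (th x) = stepk m (x 0) (cc m n x) := by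
  unfold cc
  have h1 : ps^[n+1] (th x) = ps^[n] x := by
    rw [Function.iterate_succ_apply, ps_th]
  show KK m (n+1) (ps^[n+1] (th x)) = _
  rw [h1]
  show stepk m ((ps^[n] x) n) (KK m n (ps^[n] x)) = _
  rw [ps_iter_apply]
  simp
  
end Chain

section Tail

variable {μ : Measure Om} [IsProbabilityMeasure μ]

/-- the set `A⁺ = {y : m ≤ y 0}` -/
def Aup (m : ℝ) : Set Om := {y | m ≤ y 0}
def Adown (m : ℝ) : Set Om := {y | y 0 ≤ -m}

lemma measurableSet_Aup (m : ℝ) : MeasurableSet (Aup m) :=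
  measurableSet_le measurable_const (measurable_pi_apply 0)
lemma measurableSet_Adown (m : ℝ) : MeasurableSet (Adown m) :=
  measurableSet_le (measurable_pi_apply 0) measurable_const

/-- bad tail event (upward) -/
def GRup (m : ℝ) (R : ℕ) : Set Om :=
  {x | ∃ ℓ : ℕ, 1 ≤ ℓ ∧ (ℓ : ℤ) + R ≤ 2 * SA ps (Aup m) ℓ (ps x) + 2}

def GRdown (m : ℝ) (R : ℕ) : Set Om :=
  {x | ∃ ℓ : ℕ, 1 ≤ ℓ ∧ (ℓ : ℤ) + R ≤ 2 * SA ps (Adown m) ℓ (ps x) + 2}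

lemma measurableSet_GRup (m : ℝ) (R : ℕ) : MeasurableSet (GRup m R) := by
  have : GRup m R = ⋃ ℓ : ℕ, ⋃ (_ : 1 ≤ ℓ),
      {x | (ℓ : ℤ) + R ≤ 2 * SA ps (Aup m) ℓ (ps x) + 2} := by
    ext x; simp [GRup]
  rw [this]
  refine MeasurableSet.iUnion fun ℓ => MeasurableSet.iUnion fun _ => ?_
  exact measurableSet_le measurable_const
    ((((measurable_SA measurable_ps (measurableSet_Aup m) ℓ).comp measurable_ps).const_mul 2).add_const 2)

lemma measurableSet_GRdown (m : ℝ) (R : ℕ) : MeasurableSet (GRdown m R) := by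
  have : GRdown m R = ⋃ ℓ : ℕ, ⋃ (_ : 1 ≤ ℓ),
      {x | (ℓ : ℤ) + R ≤ 2 * SA ps (Adown m) ℓ (ps x) + 2} := by
    ext x; simp [GRdown]
  rw [this]
  refine MeasurableSet.iUnion fun ℓ => MeasurableSet.iUnion fun _ => ?_
  exact measurableSet_le measurable_const
    ((((measurable_SA measurable_ps (measurableSet_Adown m) ℓ).comp measurable_ps).const_mul 2).add_const 2)

lemma GRup_antitone (m : ℝ) : Antitone (GRup m) := by
  intro R R' h x hx
  obtain ⟨ℓ, h1, h2⟩ := hx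
  refine ⟨ℓ, h1, ?_⟩
  have : (R : ℤ) ≤ R' := by exact_mod_cast h
  omega

lemma GRdown_antitone (m : ℝ) : Antitone (GRdown m) := by
  intro R R' h x hx
  obtain ⟨ℓ, h1, h2⟩ := hx
  refine ⟨ℓ, h1, ?_⟩
  have : (R : ℤ) ≤ R' := by exact_mod_cast h
  omega

/-- up inclusion: a high value of `cc` forces the tail event -/
lemma cc_gt_mem_GRup {m : ℝ} (hm : 0 < m) (n R : ℕ) (hR : 1 ≤ R) (x : Om)
    (h : (R : ℤ) < cc m n x) : x ∈ GRup m R := by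
  classical
  set y : Om := ps^[n] x with hy
  obtain ⟨ℓ, h1, h2, h3⟩ := walk_count (fun t => KK m t y) {t : ℕ | m ≤ y (t : ℤ)}
    (fun t => by
      show KK m (t+1) y = KK m t y + 1 ∨ KK m (t+1) y = KK m t y - 1
      show stepk m (y (t : ℤ)) (KK m t y) = KK m t y + 1 ∨
        stepk m (y (t : ℤ)) (KK m t y) = KK m t y - 1
      unfold stepk
      split
      · left; rfl
      · right; rfl)
    (fun t hup h2f => by
      have hup' : KK m (t+1) y = KK m t y + 1 := hup
      have h2f' : (2:ℤ) ≤ KK m t y := h2f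
      have hcond : (KK m t y : ℝ) * m ≤ y (t : ℤ) := by
        by_contra hc
        have hd : KK m (t+1) y = KK m t y - 1 := by
          show stepk m (y (t : ℤ)) (KK m t y) = KK m t y - 1
          unfold stepk
          rw [if_neg hc]
        rw [hd] at hup'
        omega
      show m ≤ y (t : ℤ)
      calc m = 1 * m := (one_mul m).symm
        _ ≤ (KK m t y : ℝ) * m := by
            apply mul_le_mul_of_nonneg_right _ hm.le
            have hh : (1:ℤ) ≤ KK m t y := by omega
            exact_mod_cast hh
        _ ≤ y (t : ℤ) := hcond)
    rfl n R hR h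
  refine ⟨ℓ, h1, ?_⟩
  have hsum : ∑ i ∈ Finset.range ℓ, Set.indicator {t : ℕ | m ≤ y (t : ℤ)} (fun _ => (1:ℤ)) (n - 1 - i)
      = SA ps (Aup m) ℓ (ps x) := by
    unfold SA
    apply Finset.sum_congr rfl
    intro i hi
    have hiℓ : i < ℓ := Finset.mem_range.mp hi
    have hval : y ((n - 1 - i : ℕ) : ℤ) = x (-1 - i) := by
      rw [hy, ps_iter_apply]
      congr 1
      have : i + 1 ≤ n := by omega
      push_cast [Nat.cast_sub (by omega : i ≤ n - 1), Nat.cast_sub (by omega : 1 ≤ n)]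
      ring
    have hval2 : (ps^[i] (ps x)) 0 = x (-1 - i) := by
      rw [ps_iter_apply]
      show ps x (0 - i) = _
      show x (0 - i - 1) = _
      congr 1
      ring
    by_cases hmem : m ≤ x (-1 - i)
    · rw [Set.indicator_of_mem (by simpa [Set.mem_setOf_eq, hval] using hmem),
        Set.indicator_of_mem (by simpa [Aup, Set.mem_setOf_eq, hval2] using hmem)]
    · rw [Set.indicator_of_notMem (by simpa [Set.mem_setOf_eq, hval] using hmem),
        Set.indicator_of_notMem (by simpa [Aup, Set.mem_setOf_eq, hval2] using hmem)]
  rw [hsum] at h3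
  exact h3

/-- down inclusion -/
lemma cc_lt_mem_GRdown {m : ℝ} (hm : 0 < m) (n R : ℕ) (hR : 1 ≤ R) (x : Om)
    (h : cc m n x < -(R : ℤ)) : x ∈ GRdown m R := by
  classical
  set y : Om := ps^[n] x with hy
  have hcc : cc m n x = KK m n y := rfl
  obtain ⟨ℓ, h1, h2, h3⟩ := walk_count (fun t => -KK m t y) {t : ℕ | y (t : ℤ) ≤ -m}
    (fun t => by
      show -KK m (t+1) y = -KK m t y + 1 ∨ -KK m (t+1) y = -KK m t y - 1
      have : KK m (t+1) y = KK m t y + 1 ∨ KK m (t+1) y = KK m t y - 1 := by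
        show stepk m (y (t : ℤ)) (KK m t y) = KK m t y + 1 ∨
          stepk m (y (t : ℤ)) (KK m t y) = KK m t y - 1
        unfold stepk
        split
        · left; rfl
        · right; rfl
      rcases this with h' | h'
      · right; rw [h']; ring
      · left; rw [h']; ring)
    (fun t hup h2f => by
      have hup' : -KK m (t+1) y = -KK m t y + 1 := hup
      have h2f' : (2:ℤ) ≤ -KK m t y := h2f
      have hcond : ¬ ((KK m t y : ℝ) * m ≤ y (t : ℤ)) := by
        by_contra hc
        have hd : KK m (t+1) y = KK m t y + 1 := by
          show stepk m (y (t : ℤ)) (KK m t y) = KK m t y + 1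
          unfold stepk
          rw [if_pos hc]
        rw [hd] at hup'
        omega
      push_neg at hcond
      show y (t : ℤ) ≤ -m
      have hk : KK m t y ≤ -1 := by omega
      apply le_of_lt
      calc y (t : ℤ) < (KK m t y : ℝ) * m := hcond
        _ ≤ (-1 : ℝ) * m := by
            apply mul_le_mul_of_nonneg_right _ hm.le
            exact_mod_cast hk
        _ = -m := by ring)
    (by show -KK m 0 y = 0; simp [KK]) n R hR (by show (R:ℤ) < -KK m n y; omega)
  refine ⟨ℓ, h1, ?_⟩
  have hsum : ∑ i ∈ Finset.range ℓ, Set.indicator {t : ℕ | y (t : ℤ) ≤ -m} (fun _ => (1:ℤ)) (n - 1 - i)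
      = SA ps (Adown m) ℓ (ps x) := by
    unfold SA
    apply Finset.sum_congr rfl
    intro i hi
    have hiℓ : i < ℓ := Finset.mem_range.mp hi
    have hval : y ((n - 1 - i : ℕ) : ℤ) = x (-1 - i) := by
      rw [hy, ps_iter_apply]
      congr 1
      push_cast [Nat.cast_sub (by omega : i ≤ n - 1), Nat.cast_sub (by omega : 1 ≤ n)]
      ring
    have hval2 : (ps^[i] (ps x)) 0 = x (-1 - i) := by
      rw [ps_iter_apply]
      show ps x (0 - i) = _
      show x (0 - i - 1) = _
      congr 1
      ring
    by_cases hmem : x (-1 - i) ≤ -m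
    · rw [Set.indicator_of_mem (by simpa [Set.mem_setOf_eq, hval] using hmem),
        Set.indicator_of_mem (by simpa [Adown, Set.mem_setOf_eq, hval2] using hmem)]
    · rw [Set.indicator_of_notMem (by simpa [Set.mem_setOf_eq, hval] using hmem),
        Set.indicator_of_notMem (by simpa [Adown, Set.mem_setOf_eq, hval2] using hmem)]
  rw [hsum] at h3
  exact h3

variable (hinv : μ.map th = μ)

lemma map_ps_eq (hinv : μ.map th = μ) : μ.map ps = μ := by
  conv_lhs => rw [← hinv]
  rw [Measure.map_map measurable_ps measurable_th]
  have : ps ∘ th = id := funext ps_th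
  rw [this, Measure.map_id]

lemma mp_ps (hinv : μ.map th = μ) : MeasurePreserving ps μ μ :=
  ⟨measurable_ps, map_ps_eq hinv⟩

lemma herg_ps (herg : ∀ B : Set Om, MeasurableSet B → th ⁻¹' B = B → μ B = 0 ∨ μ B = 1) :
    ∀ B : Set Om, MeasurableSet B → ps ⁻¹' B = B → μ B = 0 ∨ μ B = 1 := by
  intro B hB hps
  apply herg B hB
  ext x
  have h1 : ∀ z : Om, (ps z ∈ B) ↔ z ∈ B := fun z => by
    constructor
    · intro h
      have := hps ▸ (Set.mem_preimage.mpr h : z ∈ ps ⁻¹' B)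
      exact this
    · intro h
      have : z ∈ ps ⁻¹' B := hps.symm ▸ h
      exact this
  simp only [Set.mem_preimage]
  rw [← h1 (th x), ps_th]

/-- the intersection over `R` of the up tail events is null -/
lemma iInter_GRup_null {m : ℝ}
    (hinv : μ.map th = μ)
    (herg : ∀ B : Set Om, MeasurableSet B → th ⁻¹' B = B → μ B = 0 ∨ μ B = 1)
    (h₁ : μ (Aup m) < 1 / 2) :
    μ (⋂ R : ℕ, GRup m R) = 0 := by
  refine le_antisymm ?_ zero_le
  have hsub : (⋂ R : ℕ, GRup m R) ⊆ ps ⁻¹' (Bprime ps (Aup m)) := by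
    intro x hx
    simp only [Set.mem_iInter] at hx
    simp only [Set.mem_preimage, mem_Bprime_iff]
    intro k L
    obtain ⟨ℓ, h1, h2⟩ := hx (L + 3)
    have hSAle := SA_le ps (Aup m) ℓ (ps x)
    have hSA0 := SA_nonneg ps (Aup m) ℓ (ps x)
    refine ⟨ℓ, by omega, ?_⟩
    have hk0 : (0:ℤ) ≤ (k:ℤ) := Int.natCast_nonneg k
    push_cast at h2 ⊢
    nlinarith [h2, hSAle, hSA0, hk0]
  calc μ (⋂ R : ℕ, GRup m R) ≤ μ (ps ⁻¹' (Bprime ps (Aup m))) := measure_mono hsub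
    _ = μ (Bprime ps (Aup m)) := by
        rw [← map_ps_eq hinv]
        rw [Measure.map_apply measurable_ps (measurableSet_Bprime measurable_ps (measurableSet_Aup m))]
        rw [map_ps_eq hinv]
    _ = 0 := Bprime_null (mp_ps hinv) (herg_ps herg) (measurableSet_Aup m) h₁

lemma iInter_GRdown_null {m : ℝ}
    (hinv : μ.map th = μ)
    (herg : ∀ B : Set Om, MeasurableSet B → th ⁻¹' B = B → μ B = 0 ∨ μ B = 1)
    (h₂ : μ (Adown m) < 1 / 2) :
    μ (⋂ R : ℕ, GRdown m R) = 0 := by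
  refine le_antisymm ?_ zero_le
  have hsub : (⋂ R : ℕ, GRdown m R) ⊆ ps ⁻¹' (Bprime ps (Adown m)) := by
    intro x hx
    simp only [Set.mem_iInter] at hx
    simp only [Set.mem_preimage, mem_Bprime_iff]
    intro k L
    obtain ⟨ℓ, h1, h2⟩ := hx (L + 3)
    have hSAle := SA_le ps (Adown m) ℓ (ps x)
    have hSA0 := SA_nonneg ps (Adown m) ℓ (ps x)
    refine ⟨ℓ, by omega, ?_⟩
    have hk0 : (0:ℤ) ≤ (k:ℤ) := Int.natCast_nonneg k
    push_cast at h2 ⊢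
    nlinarith [h2, hSAle, hSA0, hk0]
  calc μ (⋂ R : ℕ, GRdown m R) ≤ μ (ps ⁻¹' (Bprime ps (Adown m))) := measure_mono hsub
    _ = μ (Bprime ps (Adown m)) := by
        rw [← map_ps_eq hinv]
        rw [Measure.map_apply measurable_ps (measurableSet_Bprime measurable_ps (measurableSet_Adown m))]
        rw [map_ps_eq hinv]
    _ = 0 := Bprime_null (mp_ps hinv) (herg_ps herg) (measurableSet_Adown m) h₂

/-- combined bad set -/
def Gbad (m : ℝ) (R : ℕ) : Set Om := GRup m R ∪ GRdown m R

lemma measurableSet_Gbad (m : ℝ) (R : ℕ) : MeasurableSet (Gbad m R) :=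
  (measurableSet_GRup m R).union (measurableSet_GRdown m R)

lemma Gbad_antitone (m : ℝ) : Antitone (Gbad m) := by
  intro R R' h
  exact Set.union_subset_union (GRup_antitone m h) (GRdown_antitone m h)

lemma iInter_union_subset {U D : ℕ → Set Om} (hU : Antitone U) (hD : Antitone D) :
    (⋂ R, (U R ∪ D R)) ⊆ (⋂ R, U R) ∪ (⋂ R, D R) := by
  intro x hx
  simp only [Set.mem_iInter, Set.mem_union] at hx
  by_cases hU' : ∀ R, x ∈ U R
  · left; exact Set.mem_iInter.mpr hU'
  · right
    push_neg at hU'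
    obtain ⟨R₀, hR₀⟩ := hU'
    apply Set.mem_iInter.mpr
    intro R
    rcases le_or_gt R R₀ with h' | h'
    · rcases hx R₀ with h'' | h''
      · exact absurd h'' hR₀
      · exact hD h' h''
    · rcases hx R with h'' | h''
      · exact absurd (hU h'.le h'') hR₀
      · exact h''

lemma tendsto_Gbad {m : ℝ}
    (hinv : μ.map th = μ)
    (herg : ∀ B : Set Om, MeasurableSet B → th ⁻¹' B = B → μ B = 0 ∨ μ B = 1)
    (h₁ : μ (Aup m) < 1 / 2) (h₂ : μ (Adown m) < 1 / 2) :
    Tendsto (fun R => μ (Gbad m R)) atTop (nhds 0) := by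
  have hnull : μ (⋂ R, Gbad m R) = 0 := by
    apply le_antisymm _ zero_le
    calc μ (⋂ R, Gbad m R) ≤ μ ((⋂ R, GRup m R) ∪ (⋂ R, GRdown m R)) :=
          measure_mono (iInter_union_subset (GRup_antitone m) (GRdown_antitone m))
      _ ≤ μ (⋂ R, GRup m R) + μ (⋂ R, GRdown m R) := measure_union_le _ _
      _ = 0 := by rw [iInter_GRup_null hinv herg h₁, iInter_GRdown_null hinv herg h₂]; simp
  have := tendsto_measure_iInter_atTop (μ := μ) (s := Gbad m)
    (fun R => (measurableSet_Gbad m R).nullMeasurableSet) (Gbad_antitone m)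
    ⟨0, measure_ne_top μ _⟩
  rw [hnull] at this
  exact this

/-- uniform tail bound for the chain -/
lemma cc_tail_bound {m : ℝ} (hm : 0 < m) (n : ℕ) (R : ℕ) (hR : 1 ≤ R) :
    μ {x | cc m n x ∉ Set.Icc (-(R:ℤ)) R} ≤ μ (Gbad m R) := by
  apply measure_mono
  intro x hx
  simp only [Set.mem_setOf_eq, Set.mem_Icc, not_and_or, not_le] at hx
  rcases hx with h | h
  · exact Or.inr (cc_lt_mem_GRdown hm n R hR x (by omega))
  · exact Or.inl (cc_gt_mem_GRup hm n R hR x h)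

end Tail

section Cluster

open Finset

/-- half-space at level `s·m` -/
def Uset (m : ℝ) (s : ℤ) : Set Om := {x | (s : ℝ) * m ≤ x 0}

lemma measurableSet_Uset (m : ℝ) (s : ℤ) : MeasurableSet (Uset m s) :=
  measurableSet_le measurable_const (measurable_pi_apply 0)

variable {μ : Measure Om} [IsProbabilityMeasure μ]

lemma measurableSet_Cfib (m : ℝ) (n : ℕ) (s : ℤ) : MeasurableSet {x : Om | cc m n x = s} :=
  measurable_cc m n (measurableSet_singleton s)

/-- one-step transport identity -/
lemma inv_identity (hinv : μ.map th = μ) (m : ℝ) (n : ℕ) (s : ℤ)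
    {A : Set Om} (hA : MeasurableSet A) :
    μ (A ∩ {x | cc m (n+1) x = s})
      = μ ((th ⁻¹' A ∩ Uset m (s-1)) ∩ {x | cc m n x = s-1})
        + μ ((th ⁻¹' A ∩ (Uset m (s+1))ᶜ) ∩ {x | cc m n x = s+1}) := by
  have hpre : μ (A ∩ {x | cc m (n+1) x = s}) = μ (th ⁻¹' (A ∩ {x | cc m (n+1) x = s})) := by
    conv_lhs => rw [← hinv]
    rw [Measure.map_apply measurable_th (hA.inter (measurableSet_Cfib m (n+1) s))]
  rw [hpre]
  have hset : th ⁻¹' (A ∩ {x | cc m (n+1) x = s})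
      = ((th ⁻¹' A ∩ Uset m (s-1)) ∩ {x | cc m n x = s-1})
        ∪ ((th ⁻¹' A ∩ (Uset m (s+1))ᶜ) ∩ {x | cc m n x = s+1}) := by
    ext x
    simp only [Set.mem_preimage, Set.mem_inter_iff, Set.mem_union, Set.mem_setOf_eq,
      Set.mem_compl_iff, Uset]
    constructor
    · rintro ⟨hxA, hxc⟩
      rw [cc_succ_th] at hxc
      unfold stepk at hxc
      by_cases hcond : (cc m n x : ℝ) * m ≤ x 0
      · rw [if_pos hcond] at hxc
        left
        refine ⟨⟨hxA, ?_⟩, by omega⟩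
        have : cc m n x = s - 1 := by omega
        rw [← this]
        exact hcond
      · rw [if_neg hcond] at hxc
        right
        refine ⟨⟨hxA, ?_⟩, by omega⟩
        have : cc m n x = s + 1 := by omega
        rw [← this]
        exact hcond
    · rintro (⟨⟨hxA, hcond⟩, hfib⟩ | ⟨⟨hxA, hcond⟩, hfib⟩)
      · refine ⟨hxA, ?_⟩
        rw [cc_succ_th]
        unfold stepk
        rw [hfib, if_pos hcond]
        ring
      · refine ⟨hxA, ?_⟩
        rw [cc_succ_th]
        unfold stepk
        rw [hfib, if_neg hcond]
        ring
  rw [hset]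
  apply measure_union
  · apply Set.disjoint_left.mpr
    rintro x ⟨_, hx1⟩ ⟨_, hx2⟩
    simp only [Set.mem_setOf_eq] at hx1 hx2
    omega
  · exact ((measurable_th hA).inter (measurableSet_Uset m (s+1)).compl).inter
      (measurableSet_Cfib m n (s+1))

/-- existence of the invariant fiber system -/
theorem exists_good_lam (μ : Measure Om) [IsProbabilityMeasure μ]
    (hinv : μ.map th = μ)
    (herg : ∀ B : Set Om, MeasurableSet B → th ⁻¹' B = B → μ B = 0 ∨ μ B = 1)
    {m : ℝ} (hm : 0 < m)
    (h₁ : μ (Aup m) < 1 / 2) (h₂ : μ (Adown m) < 1 / 2) :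
    ∃ lam : ℤ → Set Om → ℝ,
      (∀ s A, 0 ≤ lam s A) ∧
      (∀ s A B, MeasurableSet A → MeasurableSet B → Disjoint A B →
        lam s (A ∪ B) = lam s A + lam s B) ∧
      (∀ s A, MeasurableSet A → lam s A ≤ (μ A).toReal) ∧
      (∀ A, MeasurableSet A → ∑' s : ℤ, ENNReal.ofReal (lam s A) = μ A) ∧
      (∀ s : ℤ, ∀ A, MeasurableSet A → lam s A =
        lam (s-1) (th ⁻¹' A ∩ Uset m (s-1)) + lam (s+1) (th ⁻¹' A ∩ (Uset m (s+1))ᶜ)) := by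
  classical
  set C : ℕ → ℤ → Set Om := fun n s => {x | cc m n x = s} with hC
  have hCmeas : ∀ n s, MeasurableSet (C n s) := fun n s => measurableSet_Cfib m n s
  have hCdisj : ∀ n, ∀ s t : ℤ, s ≠ t → Disjoint (C n s) (C n t) := by
    intro n s t hst
    apply Set.disjoint_left.mpr
    intro x hx1 hx2
    simp only [hC, Set.mem_setOf_eq] at hx1 hx2
    omega
  set lamseq : ℕ → ℤ → Set Om → ℝ :=
    fun N s A => (N : ℝ)⁻¹ * ∑ n ∈ Finset.range N, (μ (A ∩ C n s)).toReal with hlamseq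
  have hterm01 : ∀ (A : Set Om) n s, (μ (A ∩ C n s)).toReal ≤ 1 := by
    intro A n s
    have h := prob_le_one (μ := μ) (s := A ∩ C n s)
    calc (μ (A ∩ C n s)).toReal ≤ (1:ℝ≥0∞).toReal :=
          ENNReal.toReal_mono (by simp) h
      _ = 1 := by simp
  have hseq01 : ∀ N s A, lamseq N s A ∈ Set.Icc (0:ℝ) 1 := by
    intro N s A
    constructor
    · apply mul_nonneg (by positivity)
      exact Finset.sum_nonneg (fun n _ => ENNReal.toReal_nonneg)
    · rcases Nat.eq_zero_or_pos N with rfl | hN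
      · simp [hlamseq]
      · have hsum : ∑ n ∈ Finset.range N, (μ (A ∩ C n s)).toReal ≤ N := by
          calc ∑ n ∈ Finset.range N, (μ (A ∩ C n s)).toReal
              ≤ ∑ _n ∈ Finset.range N, (1:ℝ) := Finset.sum_le_sum (fun n _ => hterm01 A n s)
            _ = N := by simp
        have hNpos : (0:ℝ) < N := by exact_mod_cast hN
        calc lamseq N s A ≤ (N:ℝ)⁻¹ * N := by
              apply mul_le_mul_of_nonneg_left hsum (by positivity)
          _ = 1 := by field_simp
  -- compactness
  set K : Set (ℤ → Set Om → ℝ) := {f | ∀ s A, f s A ∈ Set.Icc (0:ℝ) 1} with hK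
  have hKcompact : IsCompact K := by
    have heq : K = Set.univ.pi (fun _s : ℤ => Set.univ.pi (fun _A : Set Om => Set.Icc (0:ℝ) 1)) := by
      ext f
      simp only [hK, Set.mem_setOf_eq, Set.mem_univ_pi]
    rw [heq]
    exact isCompact_univ_pi (fun s => isCompact_univ_pi (fun A => isCompact_Icc))
  have hmemK : ∀ N, lamseq N ∈ K := fun N s A => hseq01 N s A
  have hle : Filter.map lamseq atTop ≤ Filter.principal K := by
    rw [Filter.le_principal_iff, Filter.mem_map]
    exact Filter.univ_mem' (fun N => hmemK N)
  obtain ⟨lam, hlamK, hcl⟩ := hKcompact.exists_clusterPt hle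
  have hclosed : ∀ (Cs : Set (ℤ → Set Om → ℝ)), IsClosed Cs →
      (∀ᶠ N in atTop, lamseq N ∈ Cs) → lam ∈ Cs := by
    intro Cs hCs hev
    have h2 : ClusterPt lam (Filter.principal Cs) :=
      hcl.mono (Filter.le_principal_iff.mpr hev)
    exact hCs.closure_subset (mem_closure_iff_clusterPt.mpr h2)
  have hevc : ∀ (s : ℤ) (A : Set Om), Continuous (fun f : ℤ → Set Om → ℝ => f s A) :=
    fun s A => (continuous_apply A).comp (continuous_apply s)
  -- (0) range
  have hnn : ∀ s A, 0 ≤ lam s A := fun s A => (hlamK s A).1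
  -- (1) additivity
  have hadd : ∀ s A B, MeasurableSet A → MeasurableSet B → Disjoint A B →
      lam s (A ∪ B) = lam s A + lam s B := by
    intro s A B hA hB hAB
    refine hclosed _ (isClosed_eq (hevc s (A ∪ B)) ((hevc s A).add (hevc s B)))
      (Filter.Eventually.of_forall (fun N => ?_))
    show lamseq N s (A ∪ B) = lamseq N s A + lamseq N s B
    simp only [hlamseq]
    rw [← mul_add, ← Finset.sum_add_distrib]
    congr 1
    apply Finset.sum_congr rfl
    intro n _
    have hsplit : (A ∪ B) ∩ C n s = (A ∩ C n s) ∪ (B ∩ C n s) := Set.union_inter_distrib_right A B _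
    rw [hsplit, measure_union (hAB.mono Set.inter_subset_left Set.inter_subset_left)
      (hB.inter (hCmeas n s))]
    exact ENNReal.toReal_add (measure_ne_top μ _) (measure_ne_top μ _)
  -- (2) domination
  have hdom : ∀ s A, MeasurableSet A → lam s A ≤ (μ A).toReal := by
    intro s A _hA
    refine hclosed _ (isClosed_le (hevc s A) continuous_const)
      (Filter.Eventually.of_forall (fun N => ?_))
    show lamseq N s A ≤ (μ A).toReal
    rcases Nat.eq_zero_or_pos N with rfl | hN
    · simp [hlamseq]
    · have hNpos : (0:ℝ) < N := by exact_mod_cast hN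
      have hsum : ∑ n ∈ Finset.range N, (μ (A ∩ C n s)).toReal ≤ N * (μ A).toReal := by
        calc ∑ n ∈ Finset.range N, (μ (A ∩ C n s)).toReal
            ≤ ∑ _n ∈ Finset.range N, (μ A).toReal := by
              apply Finset.sum_le_sum
              intro n _
              exact ENNReal.toReal_mono (measure_ne_top μ _) (measure_mono Set.inter_subset_left)
          _ = N * (μ A).toReal := by rw [Finset.sum_const, Finset.card_range]; ring
      calc lamseq N s A ≤ (N:ℝ)⁻¹ * (N * (μ A).toReal) :=
            mul_le_mul_of_nonneg_left hsum (by positivity)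
        _ = (μ A).toReal := by field_simp
  -- (3) finite-sum domination
  have hfindom : ∀ (F : Finset ℤ) (A : Set Om), MeasurableSet A →
      ∑ s ∈ F, lam s A ≤ (μ A).toReal := by
    intro F A hA
    refine hclosed _ (isClosed_le (by
      exact continuous_finset_sum F (fun s _ => hevc s A)) continuous_const)
      (Filter.Eventually.of_forall (fun N => ?_))
    show ∑ s ∈ F, lamseq N s A ≤ (μ A).toReal
    rcases Nat.eq_zero_or_pos N with rfl | hN
    · simp [hlamseq]
    · have hNpos : (0:ℝ) < N := by exact_mod_cast hN
      simp only [hlamseq]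
      rw [← Finset.mul_sum, Finset.sum_comm]
      have hsum : ∑ n ∈ Finset.range N, ∑ s ∈ F, (μ (A ∩ C n s)).toReal ≤ N * (μ A).toReal := by
        calc ∑ n ∈ Finset.range N, ∑ s ∈ F, (μ (A ∩ C n s)).toReal
            ≤ ∑ _n ∈ Finset.range N, (μ A).toReal := by
              apply Finset.sum_le_sum
              intro n _
              have hdisj : (F : Set ℤ).PairwiseDisjoint (fun s => A ∩ C n s) := by
                intro a _ b _ hab
                exact (hCdisj n a b hab).mono Set.inter_subset_right Set.inter_subset_right
              have := measure_biUnion_finset (μ := μ) hdisj (fun s _ => hA.inter (hCmeas n s))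
              calc ∑ s ∈ F, (μ (A ∩ C n s)).toReal
                  = (μ (⋃ s ∈ F, (A ∩ C n s))).toReal := by
                    rw [this]
                    rw [ENNReal.toReal_sum (fun s _ => measure_ne_top μ _)]
                _ ≤ (μ A).toReal := by
                    apply ENNReal.toReal_mono (measure_ne_top μ _)
                    apply measure_mono
                    apply Set.iUnion₂_subset
                    intro s _
                    exact Set.inter_subset_left
          _ = N * (μ A).toReal := by rw [Finset.sum_const, Finset.card_range]; ring
      calc (N:ℝ)⁻¹ * ∑ n ∈ Finset.range N, ∑ s ∈ F, (μ (A ∩ C n s)).toReal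
          ≤ (N:ℝ)⁻¹ * (N * (μ A).toReal) := mul_le_mul_of_nonneg_left hsum (by positivity)
        _ = (μ A).toReal := by field_simp
  -- (4) tail lower bound
  have htail : ∀ R : ℕ, 1 ≤ R →
      1 - (μ (Gbad m R)).toReal ≤ ∑ s ∈ Finset.Icc (-(R:ℤ)) R, lam s Set.univ := by
    intro R hR
    refine hclosed _ (isClosed_le continuous_const
      (continuous_finset_sum _ (fun s _ => hevc s Set.univ))) ?_
    filter_upwards [Filter.eventually_ge_atTop 1] with N hN
    show 1 - (μ (Gbad m R)).toReal ≤ ∑ s ∈ Finset.Icc (-(R:ℤ)) R, lamseq N s Set.univ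
    · have hNpos : (0:ℝ) < N := by exact_mod_cast hN
      simp only [hlamseq]
      rw [← Finset.mul_sum, Finset.sum_comm]
      have hinner : ∀ n, 1 - (μ (Gbad m R)).toReal
          ≤ ∑ s ∈ Finset.Icc (-(R:ℤ)) R, (μ (Set.univ ∩ C n s)).toReal := by
        intro n
        have hdisj : ((Finset.Icc (-(R:ℤ)) R : Finset ℤ) : Set ℤ).PairwiseDisjoint
            (fun s => Set.univ ∩ C n s) := by
          intro a _ b _ hab
          exact (hCdisj n a b hab).mono Set.inter_subset_right Set.inter_subset_right
        have hbu := measure_biUnion_finset (μ := μ) hdisj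
          (fun s _ => MeasurableSet.univ.inter (hCmeas n s))
        have hUeq : (⋃ s ∈ Finset.Icc (-(R:ℤ)) R, (Set.univ ∩ C n s))
            = {x | cc m n x ∈ Set.Icc (-(R:ℤ)) R} := by
          ext x
          simp only [Set.mem_iUnion, Set.univ_inter, hC, Set.mem_setOf_eq, Finset.mem_Icc,
            Set.mem_Icc, exists_prop]
          constructor
          · rintro ⟨s, hs, rfl⟩
            exact hs
          · intro hx
            exact ⟨cc m n x, hx, rfl⟩
        have hsum_eq : ∑ s ∈ Finset.Icc (-(R:ℤ)) R, (μ (Set.univ ∩ C n s)).toReal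
            = (μ {x | cc m n x ∈ Set.Icc (-(R:ℤ)) R}).toReal := by
          rw [← ENNReal.toReal_sum (fun s _ => measure_ne_top μ _), ← hbu, hUeq]
        rw [hsum_eq]
        have hcompl : μ {x | cc m n x ∈ Set.Icc (-(R:ℤ)) R}
            + μ {x | cc m n x ∉ Set.Icc (-(R:ℤ)) R} = 1 := by
          have hms : MeasurableSet {x | cc m n x ∈ Set.Icc (-(R:ℤ)) R} := by
            have : {x | cc m n x ∈ Set.Icc (-(R:ℤ)) R} = cc m n ⁻¹' (Set.Icc (-(R:ℤ)) R) := rfl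
            rw [this]
            exact measurable_cc m n (measurableSet_Icc)
          have hcc : {x | cc m n x ∉ Set.Icc (-(R:ℤ)) R} = {x | cc m n x ∈ Set.Icc (-(R:ℤ)) R}ᶜ := rfl
          rw [hcc, measure_add_measure_compl hms]
          exact measure_univ
        have hb := cc_tail_bound (μ := μ) hm n R hR
        have h1' : (μ {x | cc m n x ∈ Set.Icc (-(R:ℤ)) R}).toReal
            = 1 - (μ {x | cc m n x ∉ Set.Icc (-(R:ℤ)) R}).toReal := by
          have h := congrArg ENNReal.toReal hcompl
          rw [ENNReal.toReal_add (measure_ne_top μ _) (measure_ne_top μ _)] at h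
          simp only [ENNReal.toReal_one] at h
          linarith
        rw [h1']
        have : (μ {x | cc m n x ∉ Set.Icc (-(R:ℤ)) R}).toReal ≤ (μ (Gbad m R)).toReal :=
          ENNReal.toReal_mono (measure_ne_top μ _) hb
        linarith
      have hsum : (N:ℝ) * (1 - (μ (Gbad m R)).toReal)
          ≤ ∑ n ∈ Finset.range N, ∑ s ∈ Finset.Icc (-(R:ℤ)) R, (μ (Set.univ ∩ C n s)).toReal := by
        calc (N:ℝ) * (1 - (μ (Gbad m R)).toReal)
            = ∑ _n ∈ Finset.range N, (1 - (μ (Gbad m R)).toReal) := by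
              rw [Finset.sum_const, Finset.card_range]; ring
          _ ≤ _ := Finset.sum_le_sum (fun n _ => hinner n)
      calc 1 - (μ (Gbad m R)).toReal = (N:ℝ)⁻¹ * ((N:ℝ) * (1 - (μ (Gbad m R)).toReal)) := by
            field_simp
        _ ≤ (N:ℝ)⁻¹ * ∑ n ∈ Finset.range N, ∑ s ∈ Finset.Icc (-(R:ℤ)) R, (μ (Set.univ ∩ C n s)).toReal :=
            mul_le_mul_of_nonneg_left hsum (by positivity)
  -- (5) invariance identity
  have hinvar : ∀ s : ℤ, ∀ A, MeasurableSet A → lam s A =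
      lam (s-1) (th ⁻¹' A ∩ Uset m (s-1)) + lam (s+1) (th ⁻¹' A ∩ (Uset m (s+1))ᶜ) := by
    intro s A hA
    set B₁ := th ⁻¹' A ∩ Uset m (s-1) with hB₁
    set B₂ := th ⁻¹' A ∩ (Uset m (s+1))ᶜ with hB₂
    have hkey : ∀ j : ℕ, |lam s A - (lam (s-1) B₁ + lam (s+1) B₂)| ≤ 1 / (j+1 : ℝ) := by
      intro j
      refine hclosed _ (isClosed_le (Continuous.abs ((hevc s A).sub
        ((hevc (s-1) B₁).add (hevc (s+1) B₂)))) continuous_const) ?_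
      filter_upwards [Filter.eventually_ge_atTop (j+1)] with N hN
      show |lamseq N s A - (lamseq N (s-1) B₁ + lamseq N (s+1) B₂)| ≤ 1 / (j+1 : ℝ)
      have hNpos : (0:ℝ) < N := by
        have : (1:ℕ) ≤ N := le_trans (by omega) hN
        exact_mod_cast Nat.lt_of_lt_of_le Nat.zero_lt_one this
      have hterm : ∀ n, (μ (A ∩ C (n+1) s)).toReal
          = (μ (B₁ ∩ C n (s-1))).toReal + (μ (B₂ ∩ C n (s+1))).toReal := by
        intro n
        have := inv_identity hinv m n s hA
        rw [hB₁, hB₂]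
        rw [this]
        exact ENNReal.toReal_add (measure_ne_top μ _) (measure_ne_top μ _)
      have hdiff : lamseq N s A - (lamseq N (s-1) B₁ + lamseq N (s+1) B₂)
          = (N:ℝ)⁻¹ * ((μ (A ∩ C 0 s)).toReal - (μ (A ∩ C N s)).toReal) := by
        simp only [hlamseq]
        rw [← mul_add, ← mul_sub]
        congr 1
        rw [← Finset.sum_add_distrib]
        have h2 : ∑ n ∈ Finset.range N, ((μ (B₁ ∩ C n (s-1))).toReal + (μ (B₂ ∩ C n (s+1))).toReal)
            = ∑ n ∈ Finset.range N, (μ (A ∩ C (n+1) s)).toReal := by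
          apply Finset.sum_congr rfl
          intro n _
          rw [hterm n]
        rw [h2]
        have := Finset.sum_range_sub' (fun n => (μ (A ∩ C n s)).toReal) N
        calc ∑ n ∈ Finset.range N, (μ (A ∩ C n s)).toReal
              - ∑ n ∈ Finset.range N, (μ (A ∩ C (n+1) s)).toReal
            = ∑ n ∈ Finset.range N, ((μ (A ∩ C n s)).toReal - (μ (A ∩ C (n+1) s)).toReal) := by
              rw [Finset.sum_sub_distrib]
          _ = (μ (A ∩ C 0 s)).toReal - (μ (A ∩ C N s)).toReal := this
      rw [hdiff]
      rw [abs_mul]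
      have habs1 : |(N:ℝ)⁻¹| = (N:ℝ)⁻¹ := abs_of_nonneg (by positivity)
      have habs2 : |(μ (A ∩ C 0 s)).toReal - (μ (A ∩ C N s)).toReal| ≤ 1 := by
        rw [abs_le]
        constructor
        · have := hterm01 A N s
          have h0 := ENNReal.toReal_nonneg (a := μ (A ∩ C 0 s))
          linarith
        · have := hterm01 A 0 s
          have h0 := ENNReal.toReal_nonneg (a := μ (A ∩ C N s))
          linarith
      have hNj : 1 / (N:ℝ) ≤ 1 / (j+1:ℝ) := by
        apply one_div_le_one_div_of_le (by positivity)
        exact_mod_cast hN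
      calc |(N:ℝ)⁻¹| * |(μ (A ∩ C 0 s)).toReal - (μ (A ∩ C N s)).toReal|
          ≤ (N:ℝ)⁻¹ * 1 := by
            rw [habs1]
            exact mul_le_mul_of_nonneg_left habs2 (by positivity)
        _ = 1 / (N:ℝ) := by ring
        _ ≤ 1 / (j+1:ℝ) := hNj
    have hzero : |lam s A - (lam (s-1) B₁ + lam (s+1) B₂)| ≤ 0 := by
      have htends : Tendsto (fun j : ℕ => 1 / (j+1 : ℝ)) atTop (nhds 0) :=
        tendsto_one_div_add_atTop_nhds_zero_nat
      exact ge_of_tendsto htends (Filter.Eventually.of_forall hkey)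
    have heq0 := abs_eq_zero.mp (le_antisymm hzero (abs_nonneg _))
    linarith [heq0]
  -- (6) total mass identity
  have htot : ∀ A, MeasurableSet A → ∑' s : ℤ, ENNReal.ofReal (lam s A) = μ A := by
    have hfinle : ∀ (A : Set Om), MeasurableSet A → ∀ (F : Finset ℤ),
        ∑ s ∈ F, ENNReal.ofReal (lam s A) ≤ μ A := by
      intro A hA F
      calc ∑ s ∈ F, ENNReal.ofReal (lam s A) = ENNReal.ofReal (∑ s ∈ F, lam s A) := by
            rw [ENNReal.ofReal_sum_of_nonneg (fun s _ => hnn s A)]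
        _ ≤ ENNReal.ofReal ((μ A).toReal) := ENNReal.ofReal_le_ofReal (hfindom F A hA)
        _ = μ A := ENNReal.ofReal_toReal (measure_ne_top μ _)
    have hle' : ∀ A, MeasurableSet A → ∑' s : ℤ, ENNReal.ofReal (lam s A) ≤ μ A := by
      intro A hA
      rw [ENNReal.tsum_eq_iSup_sum]
      exact iSup_le (fun F => hfinle A hA F)
    have huniv : 1 ≤ ∑' s : ℤ, ENNReal.ofReal (lam s Set.univ) := by
      have hev : ∀ R : ℕ, 1 ≤ R → ENNReal.ofReal (1 - (μ (Gbad m R)).toReal)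
          ≤ ∑' s : ℤ, ENNReal.ofReal (lam s Set.univ) := by
        intro R hR
        calc ENNReal.ofReal (1 - (μ (Gbad m R)).toReal)
            ≤ ENNReal.ofReal (∑ s ∈ Finset.Icc (-(R:ℤ)) R, lam s Set.univ) :=
              ENNReal.ofReal_le_ofReal (htail R hR)
          _ = ∑ s ∈ Finset.Icc (-(R:ℤ)) R, ENNReal.ofReal (lam s Set.univ) :=
              ENNReal.ofReal_sum_of_nonneg (fun s _ => hnn s Set.univ)
          _ ≤ ∑' s : ℤ, ENNReal.ofReal (lam s Set.univ) := ENNReal.sum_le_tsum _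
      have htoReal : Tendsto (fun R : ℕ => (μ (Gbad m R)).toReal) atTop (nhds 0) := by
        have h := tendsto_Gbad (μ := μ) hinv herg h₁ h₂
        have := (ENNReal.tendsto_toReal (by simp : (0:ℝ≥0∞) ≠ ⊤)).comp h
        simpa [Function.comp_def] using this
      have hofReal : Tendsto (fun R : ℕ => ENNReal.ofReal (1 - (μ (Gbad m R)).toReal)) atTop
          (nhds 1) := by
        have h1' : Tendsto (fun R : ℕ => 1 - (μ (Gbad m R)).toReal) atTop (nhds 1) := by
          have := htoReal.const_sub 1
          simpa using this
        have := (ENNReal.continuous_ofReal.tendsto 1).comp h1'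
        simpa [Function.comp_def] using this
      apply le_of_tendsto hofReal
      filter_upwards [Filter.eventually_ge_atTop 1] with R hR
      exact hev R hR
    intro A hA
    have h1 : ∑' s : ℤ, ENNReal.ofReal (lam s A) ≤ μ A := hle' A hA
    have h2 : ∑' s : ℤ, ENNReal.ofReal (lam s Aᶜ) ≤ μ Aᶜ := hle' Aᶜ hA.compl
    have hsplit : ∀ s : ℤ, lam s Set.univ = lam s A + lam s Aᶜ := by
      intro s
      have := hadd s A Aᶜ hA hA.compl disjoint_compl_right
      rw [Set.union_compl_self] at this
      exact this
    have hsum : (∑' s : ℤ, ENNReal.ofReal (lam s A)) + (∑' s : ℤ, ENNReal.ofReal (lam s Aᶜ))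
        = ∑' s : ℤ, ENNReal.ofReal (lam s Set.univ) := by
      rw [← ENNReal.tsum_add]
      apply tsum_congr
      intro s
      rw [hsplit s, ENNReal.ofReal_add (hnn s A) (hnn s Aᶜ)]
    have htotal : μ A + μ Aᶜ ≤ (∑' s : ℤ, ENNReal.ofReal (lam s A)) + (∑' s : ℤ, ENNReal.ofReal (lam s Aᶜ)) := by
      rw [hsum, measure_add_measure_compl hA, measure_univ]
      exact huniv
    -- conclude equality
    refine le_antisymm h1 ?_
    by_contra hlt
    push_neg at hlt
    have hne1 : (∑' s : ℤ, ENNReal.ofReal (lam s A)) ≠ ⊤ :=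
      (lt_of_le_of_lt h1 (measure_lt_top μ A)).ne
    have hne2 : (∑' s : ℤ, ENNReal.ofReal (lam s Aᶜ)) ≠ ⊤ :=
      (lt_of_le_of_lt h2 (measure_lt_top μ Aᶜ)).ne
    have : μ A + μ Aᶜ < μ A + μ Aᶜ := by
      calc μ A + μ Aᶜ ≤ (∑' s : ℤ, ENNReal.ofReal (lam s A)) + (∑' s : ℤ, ENNReal.ofReal (lam s Aᶜ)) := htotal
        _ < μ A + μ Aᶜ := by
            apply ENNReal.add_lt_add_of_lt_of_le hne2 hlt h2
    exact lt_irrefl _ this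
  exact ⟨lam, hnn, hadd, hdom, htot, hinvar⟩

end Cluster

section Build

lemma exists_fiber_measures (μ : Measure Om) [IsProbabilityMeasure μ]
    (lam : ℤ → Set Om → ℝ)
    (hnn : ∀ s A, 0 ≤ lam s A)
    (hadd : ∀ s A B, MeasurableSet A → MeasurableSet B → Disjoint A B →
      lam s (A ∪ B) = lam s A + lam s B)
    (hdom : ∀ s A, MeasurableSet A → lam s A ≤ (μ A).toReal) :
    ∃ ρ : ℤ → Measure Om, ∀ s A, MeasurableSet A → ρ s A = ENNReal.ofReal (lam s A) := by
  classical
  have hempty : ∀ s, lam s ∅ = 0 := by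
    intro s
    have := hadd s ∅ ∅ MeasurableSet.empty MeasurableSet.empty (by simp)
    simp at this
    linarith
  have hmono : ∀ s A B, MeasurableSet A → MeasurableSet B → A ⊆ B → lam s A ≤ lam s B := by
    intro s A B hA hB hAB
    have hcover : A ∪ (B \ A) = B := Set.union_diff_cancel hAB
    calc lam s A ≤ lam s A + lam s (B \ A) := le_add_of_nonneg_right (hnn _ _)
      _ = lam s (A ∪ (B \ A)) := (hadd s A (B \ A) hA (hB.diff hA) Set.disjoint_sdiff_right).symm
      _ = lam s B := by rw [hcover]
  have hfinadd : ∀ s (f : ℕ → Set Om), (∀ i, MeasurableSet (f i)) → Pairwise (Function.onFun Disjoint f) →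
      ∀ n, ∑ i ∈ Finset.range n, lam s (f i) = lam s (⋃ i ∈ Finset.range n, f i) := by
    intro s f hf hdisj n
    induction n with
    | zero => simp [hempty]
    | succ n ih =>
      rw [Finset.sum_range_succ, ih]
      have hun : (⋃ i ∈ Finset.range (n+1), f i) = (⋃ i ∈ Finset.range n, f i) ∪ f n := by
        ext x
        simp only [Set.mem_iUnion, Finset.mem_range, Set.mem_union, exists_prop]
        constructor
        · rintro ⟨i, hi, hx⟩
          rcases Nat.lt_or_ge i n with h | h
          · exact Or.inl ⟨i, h, hx⟩
          · have : i = n := by omega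
            subst this
            exact Or.inr hx
        · rintro (⟨i, hi, hx⟩ | hx)
          · exact ⟨i, by omega, hx⟩
          · exact ⟨n, by omega, hx⟩
      have hmU : MeasurableSet (⋃ i ∈ Finset.range n, f i) :=
        MeasurableSet.biUnion (Finset.range n).countable_toSet (fun i _ => hf i)
      have hdj : Disjoint (⋃ i ∈ Finset.range n, f i) (f n) := by
        apply Set.disjoint_left.mpr
        intro x hx hxn
        simp only [Set.mem_iUnion, Finset.mem_range, exists_prop] at hx
        obtain ⟨i, hi, hxi⟩ := hx
        exact Set.disjoint_left.mp (hdisj (show i ≠ n by omega)) hxi hxn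
      rw [hun, hadd s _ (f n) hmU (hf n) hdj]
  have key : ∀ s : ℤ, ∀ ⦃f : ℕ → Set Om⦄, (∀ i, MeasurableSet (f i)) → Pairwise (Function.onFun Disjoint f) →
      ENNReal.ofReal (lam s (⋃ i, f i)) = ∑' i, ENNReal.ofReal (lam s (f i)) := by
    intro s f hf hdisj
    have hmUall : MeasurableSet (⋃ i, f i) := MeasurableSet.iUnion hf
    apply le_antisymm
    · -- ≤ : via tails
      have hrest : ∀ n, lam s (⋃ i, f i)
          ≤ (∑ i ∈ Finset.range n, lam s (f i)) + (μ (⋃ i, f (i + n))).toReal := by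
        intro n
        have hsplit : (⋃ i, f i) = (⋃ i ∈ Finset.range n, f i) ∪ (⋃ i, f (i + n)) := by
          ext x
          simp only [Set.mem_iUnion, Finset.mem_range, Set.mem_union, exists_prop]
          constructor
          · rintro ⟨i, hx⟩
            rcases Nat.lt_or_ge i n with h | h
            · exact Or.inl ⟨i, h, hx⟩
            · exact Or.inr ⟨i - n, by rwa [Nat.sub_add_cancel h]⟩
          · rintro (⟨i, _, hx⟩ | ⟨i, hx⟩)
            · exact ⟨i, hx⟩
            · exact ⟨i + n, hx⟩
        have hm1 : MeasurableSet (⋃ i ∈ Finset.range n, f i) :=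
          MeasurableSet.biUnion (Finset.range n).countable_toSet (fun i _ => hf i)
        have hm2 : MeasurableSet (⋃ i, f (i + n)) := MeasurableSet.iUnion (fun i => hf _)
        have hdj : Disjoint (⋃ i ∈ Finset.range n, f i) (⋃ i, f (i + n)) := by
          apply Set.disjoint_left.mpr
          intro x hx hx2
          simp only [Set.mem_iUnion, Finset.mem_range, exists_prop] at hx hx2
          obtain ⟨i, hi, hxi⟩ := hx
          obtain ⟨j, hxj⟩ := hx2
          exact Set.disjoint_left.mp (hdisj (show i ≠ j + n by omega)) hxi hxj
        calc lam s (⋃ i, f i) = lam s (⋃ i ∈ Finset.range n, f i) + lam s (⋃ i, f (i + n)) := by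
              conv_lhs => rw [hsplit]
              exact hadd s _ _ hm1 hm2 hdj
          _ ≤ (∑ i ∈ Finset.range n, lam s (f i)) + (μ (⋃ i, f (i + n))).toReal := by
              apply add_le_add
              · rw [hfinadd s f hf hdisj n]
              · exact hdom s _ hm2
      have htail0 : Tendsto (fun n => μ (⋃ i, f (i + n))) atTop (nhds 0) := by
        have hμeq : ∀ n, μ (⋃ i, f (i + n)) = ∑' i, μ (f (i + n)) := by
          intro n
          apply measure_iUnion _ (fun i => hf _)
          intro i j hij
          exact hdisj (show i + n ≠ j + n by omega)
        have hne : (∑' i, μ (f i)) ≠ ⊤ := by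
          rw [← measure_iUnion hdisj hf]
          exact measure_ne_top μ _
        have := ENNReal.tendsto_sum_nat_add (fun i => μ (f i)) hne
        apply Tendsto.congr _ this
        intro n
        exact (hμeq n).symm
      have hchain : ∀ n, ENNReal.ofReal (lam s (⋃ i, f i))
          ≤ (∑' i, ENNReal.ofReal (lam s (f i))) + μ (⋃ i, f (i + n)) := by
        intro n
        calc ENNReal.ofReal (lam s (⋃ i, f i))
            ≤ ENNReal.ofReal ((∑ i ∈ Finset.range n, lam s (f i)) + (μ (⋃ i, f (i + n))).toReal) :=
              ENNReal.ofReal_le_ofReal (hrest n)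
          _ ≤ ENNReal.ofReal (∑ i ∈ Finset.range n, lam s (f i))
              + ENNReal.ofReal ((μ (⋃ i, f (i + n))).toReal) := ENNReal.ofReal_add_le
          _ = (∑ i ∈ Finset.range n, ENNReal.ofReal (lam s (f i))) + μ (⋃ i, f (i + n)) := by
              rw [ENNReal.ofReal_sum_of_nonneg (fun i _ => hnn s (f i)),
                ENNReal.ofReal_toReal (measure_ne_top μ _)]
          _ ≤ (∑' i, ENNReal.ofReal (lam s (f i))) + μ (⋃ i, f (i + n)) :=
              add_le_add_left (ENNReal.sum_le_tsum _) _
      have hlim : Tendsto (fun n => (∑' i, ENNReal.ofReal (lam s (f i))) + μ (⋃ i, f (i + n)))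
          atTop (nhds ((∑' i, ENNReal.ofReal (lam s (f i))) + 0)) :=
        Tendsto.const_add _ htail0
      rw [add_zero] at hlim
      exact ge_of_tendsto hlim (Filter.Eventually.of_forall hchain)
    · -- ≥
      have hb : ∀ n, ∑ i ∈ Finset.range n, ENNReal.ofReal (lam s (f i))
          ≤ ENNReal.ofReal (lam s (⋃ i, f i)) := by
        intro n
        rw [← ENNReal.ofReal_sum_of_nonneg (fun i _ => hnn s (f i))]
        apply ENNReal.ofReal_le_ofReal
        rw [hfinadd s f hf hdisj n]
        apply hmono s _ _ (MeasurableSet.biUnion (Finset.range n).countable_toSet (fun i _ => hf i))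
          hmUall
        apply Set.iUnion₂_subset
        intro i _
        exact Set.subset_iUnion f i
      rw [ENNReal.tsum_eq_iSup_sum' (fun n => Finset.range n) Finset.exists_nat_subset_range]
      exact iSup_le hb
  refine ⟨fun s => Measure.ofMeasurable (fun A _ => ENNReal.ofReal (lam s A))
    (by simp [hempty]) (fun f hf hd => key s hf hd), ?_⟩
  intro s A hA
  exact Measure.ofMeasurable_apply A hA

end Build
end DeltaMod

open DeltaMod

/-- for a stationary ergodic real source with
`μ{x : x₀ ≥ m} < 1/2` and `μ{x : x₀ ≤ −m} < 1/2`, the `Δ`-modulation pair process is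
stochastically stable: there is a probability measure on `ℝ^ℤ × mℤ` with first
marginal `μ` invariant under the skew product. -/
theorem deltaModulation_stochastically_stable
    (μ : Measure (ℤ → ℝ)) [IsProbabilityMeasure μ]
    (hinv : μ.map (fun x n => x (n + 1)) = μ)
    (herg : ∀ B : Set (ℤ → ℝ), MeasurableSet B →
      (fun x (n : ℤ) => x (n + 1)) ⁻¹' B = B → μ B = 0 ∨ μ B = 1)
    (m : ℝ) (hm : 0 < m)
    (h₁ : μ {x | m ≤ x 0} < 1 / 2)
    (h₂ : μ {x | x 0 ≤ -m} < 1 / 2) :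
    ∃ v : Measure ((ℤ → ℝ) × mZ m), IsProbabilityMeasure v ∧
      v.map Prod.fst = μ ∧ v.map (skewProd (deltaF m)) = v := by
  classical
  have hinv' : μ.map th = μ := hinv
  have herg' : ∀ B : Set Om, MeasurableSet B → th ⁻¹' B = B → μ B = 0 ∨ μ B = 1 := herg
  have h₁' : μ (Aup m) < 1 / 2 := h₁
  have h₂' : μ (Adown m) < 1 / 2 := h₂
  obtain ⟨lam, hnn, hadd, hdom, htot, hinvar⟩ := exists_good_lam μ hinv' herg' hm h₁' h₂'
  obtain ⟨ρ, hρ⟩ := exists_fiber_measures μ lam hnn hadd hdom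
  -- setup
  set e : ℤ → mZ m := fun k => ⟨(k : ℝ) * m, ⟨k, rfl⟩⟩ with he
  set ι : ℤ → Om → Om × mZ m := fun s x => (x, e s) with hι
  have hιm : ∀ s, Measurable (ι s) := fun s => measurable_id.prodMk measurable_const
  set Φ : Om × mZ m → Om × mZ m := skewProd (deltaF m) with hΦ
  have hQm : Measurable (deltaQ m) := by
    unfold deltaQ
    exact Measurable.ite (measurableSet_le measurable_const measurable_id)
      measurable_const measurable_const
  have hFm : Measurable (deltaF m) := by
    apply Measurable.subtype_mk
    exact (measurable_subtype_coe.comp measurable_snd).add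
      (hQm.comp (measurable_fst.sub (measurable_subtype_coe.comp measurable_snd)))
  have hΦm : Measurable Φ := by
    apply Measurable.prodMk
    · exact measurable_pi_lambda _ (fun n => (measurable_pi_apply (n+1)).comp measurable_fst)
    · exact hFm.comp (((measurable_pi_apply 0).comp measurable_fst).prodMk measurable_snd)
  -- the candidate measure
  set v : Measure (Om × mZ m) := Measure.sum (fun s : ℤ => (ρ s).map (ι s)) with hv
  have hρ_meas_apply : ∀ s (E : Set (Om × mZ m)), MeasurableSet E →
      ((ρ s).map (ι s)) E = ρ s (ι s ⁻¹' E) := by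
    intro s E hE
    exact Measure.map_apply (hιm s) hE
  have hv_apply : ∀ (E : Set (Om × mZ m)), MeasurableSet E →
      v E = ∑' s : ℤ, ρ s (ι s ⁻¹' E) := by
    intro E hE
    rw [hv, Measure.sum_apply _ hE]
    exact tsum_congr (fun s => hρ_meas_apply s E hE)
  have hρA : ∀ s (A : Set Om), MeasurableSet A → ρ s A = ENNReal.ofReal (lam s A) := hρ
  have htotA : ∀ (A : Set Om), MeasurableSet A → (∑' s : ℤ, ρ s A) = μ A := by
    intro A hA
    rw [← htot A hA]
    exact tsum_congr (fun s => hρA s A hA)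
  -- probability
  have hprob : IsProbabilityMeasure v := by
    constructor
    rw [hv_apply Set.univ MeasurableSet.univ]
    have : ∀ s : ℤ, ι s ⁻¹' (Set.univ : Set (Om × mZ m)) = Set.univ := fun s => rfl
    calc (∑' s : ℤ, ρ s (ι s ⁻¹' Set.univ)) = ∑' s : ℤ, ρ s Set.univ := by
          exact tsum_congr (fun s => by rw [this s])
      _ = μ Set.univ := htotA Set.univ MeasurableSet.univ
      _ = 1 := measure_univ
  refine ⟨v, hprob, ?_, ?_⟩
  · -- first marginal
    apply Measure.ext
    intro E hE
    rw [Measure.map_apply measurable_fst hE, hv_apply _ (measurable_fst hE)]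
    have hpre : ∀ s : ℤ, ι s ⁻¹' (Prod.fst ⁻¹' E) = E := fun s => rfl
    calc (∑' s : ℤ, ρ s (ι s ⁻¹' (Prod.fst ⁻¹' E))) = ∑' s : ℤ, ρ s E := by
          exact tsum_congr (fun s => by rw [hpre s])
      _ = μ E := htotA E hE
  · -- invariance
    have htau : ∀ j : ℤ,
        ((ρ (j-1)).restrict (Uset m (j-1))).map th
          + ((ρ (j+1)).restrict ((Uset m (j+1))ᶜ)).map th = ρ j := by
      intro j
      apply Measure.ext
      intro A hA
      rw [Measure.add_apply]
      rw [Measure.map_apply measurable_th hA, Measure.map_apply measurable_th hA]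
      rw [Measure.restrict_apply (measurable_th hA), Measure.restrict_apply (measurable_th hA)]
      have hB₁ : MeasurableSet (th ⁻¹' A ∩ Uset m (j-1)) :=
        (measurable_th hA).inter (measurableSet_Uset m (j-1))
      have hB₂ : MeasurableSet (th ⁻¹' A ∩ (Uset m (j+1))ᶜ) :=
        (measurable_th hA).inter (measurableSet_Uset m (j+1)).compl
      rw [hρA _ _ hB₁, hρA _ _ hB₂, hρA j A hA]
      rw [← ENNReal.ofReal_add (hnn _ _) (hnn _ _)]
      congr 1
      exact (hinvar j A hA).symm
    have hdecomp : ∀ s : ℤ, (ρ s).map (Φ ∘ ι s)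
        = ((ρ s).restrict (Uset m s)).map (ι (s+1) ∘ th)
          + ((ρ s).restrict ((Uset m s)ᶜ)).map (ι (s-1) ∘ th) := by
      intro s
      conv_lhs => rw [← Measure.restrict_add_restrict_compl (μ := ρ s) (measurableSet_Uset m s)]
      rw [Measure.map_add _ _ (hΦm.comp (hιm s))]
      congr 1
      · apply Measure.map_congr
        apply Filter.eventually_of_mem (self_mem_ae_restrict (measurableSet_Uset m s))
        intro x hx
        have hcond : (s : ℝ) * m ≤ x 0 := hx
        have hF : deltaF m (x 0, e s) = e (s+1) := by
          apply Subtype.ext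
          show (e s).val + deltaQ m (x 0 - (e s).val) = (e (s+1)).val
          unfold deltaQ
          rw [if_pos (by simp only [he]; linarith)]
          simp only [he]
          push_cast
          ring
        show Φ (ι s x) = ι (s+1) (th x)
        show (th x, deltaF m (x 0, e s)) = (th x, e (s+1))
        rw [hF]
      · apply Measure.map_congr
        apply Filter.eventually_of_mem (self_mem_ae_restrict (measurableSet_Uset m s).compl)
        intro x hx
        have hcond : ¬ ((s : ℝ) * m ≤ x 0) := hx
        have hF : deltaF m (x 0, e s) = e (s-1) := by
          apply Subtype.ext
          show (e s).val + deltaQ m (x 0 - (e s).val) = (e (s-1)).val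
          unfold deltaQ
          rw [if_neg (by simp only [he]; intro hcon; apply hcond; linarith)]
          simp only [he]
          push_cast
          ring
        show Φ (ι s x) = ι (s-1) (th x)
        show (th x, deltaF m (x 0, e s)) = (th x, e (s-1))
        rw [hF]
    apply Measure.ext
    intro E hE
    rw [Measure.map_apply hΦm hE, hv_apply _ (hΦm hE)]
    set F1 : ℤ → ℝ≥0∞ := fun s => ((ρ s).restrict (Uset m s)).map th (ι (s+1) ⁻¹' E) with hF1
    set F2 : ℤ → ℝ≥0∞ := fun s => ((ρ s).restrict ((Uset m s)ᶜ)).map th (ι (s-1) ⁻¹' E) with hF2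
    have hfib : ∀ s : ℤ, ρ s (ι s ⁻¹' (Φ ⁻¹' E)) = F1 s + F2 s := by
      intro s
      have h1 : ρ s (ι s ⁻¹' (Φ ⁻¹' E)) = ((ρ s).map (Φ ∘ ι s)) E := by
        rw [Measure.map_apply (hΦm.comp (hιm s)) hE]
        rfl
      rw [h1, hdecomp s, Measure.add_apply]
      simp only [hF1, hF2]
      congr 1
      · rw [Measure.map_apply ((hιm (s+1)).comp measurable_th) hE,
          Measure.map_apply measurable_th ((hιm (s+1)) hE)]
        rfl
      · rw [Measure.map_apply ((hιm (s-1)).comp measurable_th) hE,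
          Measure.map_apply measurable_th ((hιm (s-1)) hE)]
        rfl
    calc (∑' s : ℤ, ρ s (ι s ⁻¹' (Φ ⁻¹' E))) = ∑' s : ℤ, (F1 s + F2 s) := tsum_congr hfib
      _ = (∑' s : ℤ, F1 s) + (∑' s : ℤ, F2 s) := ENNReal.tsum_add
      _ = (∑' j : ℤ, F1 (j - 1)) + (∑' j : ℤ, F2 (j + 1)) := by
          congr 1
          · exact ((Equiv.subRight (1:ℤ)).tsum_eq F1).symm
          · exact ((Equiv.addRight (1:ℤ)).tsum_eq F2).symm
      _ = ∑' j : ℤ, (F1 (j - 1) + F2 (j + 1)) := ENNReal.tsum_add.symm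
      _ = ∑' j : ℤ, ρ j (ι j ⁻¹' E) := by
          apply tsum_congr
          intro j
          have hj1 : j - 1 + 1 = j := by ring
          have hj2 : j + 1 - 1 = j := by ring
          simp only [hF1, hF2, hj1, hj2]
          rw [← Measure.add_apply, htau j]
      _ = v E := (hv_apply E hE).symm
end
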